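/- arXiv:2503.05922 — 4 statements merged into one kernel-verified Lean document; each statement's English description precedes it below -/
import Mathlib

section
/- Let ‖·‖_X and ‖·‖_Y be rearrangement-invariant function norms over (0,∞) with Lebesgue measure. Then for every a > 0 one has φ_Y(a) ≤ 2 · (sup over measurable f on (0,∞) with ‖f‖_X ≤ 1 of ‖f^* χ_{(a,∞)}‖_Y) · φ_X(a), where φ_X, φ_Y are the fundamental functions of X and Y. -/
open MeasureTheory Set Filter Topology
open scoped ENNReal NNReal

noncomputable section

/-- The nonincreasing rearrangement of an `ℝ≥0∞`-valued function with respect to `μ`: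
`f^*(t) = inf {λ : μ({f > λ}) ≤ t}`. -/
def rearr {α : Type*} [MeasurableSpace α] (μ : Measure α) (f : α → ℝ≥0∞) (t : ℝ) : ℝ≥0∞ :=
  sInf {l : ℝ≥0∞ | μ {x | l < f x} ≤ ENNReal.ofReal t}

/-- A rearrangement-invariant function norm over the measure space `(α, μ)`, acting on
nonnegative (`ℝ≥0∞`-valued) measurable functions. -/
structure RINorm {α : Type*} [MeasurableSpace α] (μ : Measure α) where
  N : (α → ℝ≥0∞) → ℝ≥0∞
  add_le : ∀ f g : α → ℝ≥0∞, Measurable f → Measurable g →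
    N (fun x => f x + g x) ≤ N f + N g
  smul_eq : ∀ (c : ℝ≥0) (f : α → ℝ≥0∞), Measurable f →
    N (fun x => (c : ℝ≥0∞) * f x) = (c : ℝ≥0∞) * N f
  eq_zero_iff : ∀ f : α → ℝ≥0∞, Measurable f → (N f = 0 ↔ f =ᵐ[μ] 0)
  mono : ∀ f g : α → ℝ≥0∞, Measurable f → Measurable g →
    (∀ᵐ x ∂μ, f x ≤ g x) → N f ≤ N g
  fatou : ∀ (F : ℕ → α → ℝ≥0∞) (f : α → ℝ≥0∞), (∀ k, Measurable (F k)) → Measurable f →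
    (∀ᵐ x ∂μ, Monotone fun k => F k x) → (∀ᵐ x ∂μ, (⨆ k, F k x) = f x) →
    (⨆ k, N (F k)) = N f
  indicator_lt_top : ∀ E : Set α, MeasurableSet E → μ E < ∞ →
    N (E.indicator fun _ => 1) < ∞
  exists_integral_le : ∀ E : Set α, MeasurableSet E → μ E < ∞ → ∃ C : ℝ≥0∞, C < ∞ ∧
    ∀ f : α → ℝ≥0∞, Measurable f → (∫⁻ x in E, f x ∂μ) ≤ C * N f
  rearr_invariant : ∀ f g : α → ℝ≥0∞, Measurable f → Measurable g →
    (∀ l : ℝ≥0∞, μ {x | l < f x} = μ {x | l < g x}) → N f = N g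

/-- Lebesgue measure on `(0,∞)`. -/
def μI : Measure ℝ := volume.restrict (Set.Ioi (0 : ℝ))



lemma μI_Ioo (x y : ℝ) (hx : 0 ≤ x) : μI (Set.Ioo x y) = ENNReal.ofReal (y - x) := by
  rw [μI, Measure.restrict_apply measurableSet_Ioo]
  have hsub : Set.Ioo x y ∩ Set.Ioi 0 = Set.Ioo x y :=
    inter_eq_self_of_subset_left (fun z hz => lt_of_le_of_lt hx hz.1)
  rw [hsub, Real.volume_Ioo]

lemma levelset_smul_indicator (c : ℝ≥0∞) (E : Set ℝ) (l : ℝ≥0∞) :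
    {x | l < c * E.indicator (fun _ => (1:ℝ≥0∞)) x} = if l < c then E else ∅ := by
  ext x
  by_cases hx : x ∈ E <;> split_ifs with hl <;> simp [hx, hl]

lemma levelset_indicator (E : Set ℝ) (l : ℝ≥0∞) :
    {x | l < E.indicator (fun _ => (1:ℝ≥0∞)) x} = if l < 1 then E else ∅ := by
  ext x
  by_cases hx : x ∈ E <;> split_ifs with hl <;> simp [hx, hl]


/-- The fundamental function of an r.i. norm over `(0,∞)`: `φ_X(t) = ‖χ_(0,t)‖_X`. -/
def fund (X : RINorm μI) (t : ℝ) : ℝ≥0∞ := X.N ((Set.Ioo (0 : ℝ) t).indicator fun _ => 1)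

lemma N_ind_congr (Z : RINorm μI) {E F : Set ℝ} (hE : MeasurableSet E) (hF : MeasurableSet F)
    (h : μI E = μI F) :
    Z.N (E.indicator fun _ => 1) = Z.N (F.indicator fun _ => 1) := by
  refine Z.rearr_invariant _ _ (measurable_const.indicator hE) (measurable_const.indicator hF) ?_
  intro l
  rw [levelset_indicator, levelset_indicator]
  split_ifs <;> simp [h]


/-- `φ_Y(a) ≤ 2 · (sup_{‖f‖_X ≤ 1} ‖f^* χ_(a,∞)‖_Y) · φ_X(a)` for every `a > 0`. -/
theorem fund_ratio_le_two_mul_sup (X Y : RINorm μI) (a : ℝ) (ha : 0 < a) :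
    fund Y a ≤
      2 * (⨆ (f : ℝ → ℝ≥0∞) (_ : Measurable f) (_ : X.N f ≤ 1),
          Y.N ((Set.Ioi a).indicator fun t => rearr μI f t)) * fund X a := by

  set S := ⨆ (f : ℝ → ℝ≥0∞) (_ : Measurable f) (_ : X.N f ≤ 1),
      Y.N ((Set.Ioi a).indicator fun t => rearr μI f t) with hS_def
  have h2a : (0:ℝ) < 2 * a := by linarith
  set φ2 := fund X (2 * a) with hφ2
  have hμIoo2a : μI (Set.Ioo 0 (2*a)) = ENNReal.ofReal (2*a) := by
    rw [μI_Ioo 0 (2*a) le_rfl, sub_zero]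
  have hmeas2a : Measurable ((Set.Ioo (0:ℝ) (2*a)).indicator fun _ => (1:ℝ≥0∞)) :=
    measurable_const.indicator measurableSet_Ioo
  have h0 : φ2 ≠ 0 := by
    intro h
    have hz := (X.eq_zero_iff _ hmeas2a).mp h
    rw [EventuallyEq, ae_iff] at hz
    have hsub : Set.Ioo (0:ℝ) (2*a)
        ⊆ {x | ¬ (Set.Ioo (0:ℝ) (2*a)).indicator (fun _ => (1:ℝ≥0∞)) x = (0:ℝ → ℝ≥0∞) x} :=
      fun x hx => by
        simp only [mem_setOf_eq, Set.indicator_of_mem hx, Pi.zero_apply]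
        exact one_ne_zero
    have hle := (measure_mono hsub).trans_eq hz
    rw [hμIoo2a] at hle
    simp only [nonpos_iff_eq_zero, ENNReal.ofReal_eq_zero] at hle
    linarith
  have htop : φ2 ≠ ∞ := by
    have := X.indicator_lt_top _ measurableSet_Ioo (by rw [hμIoo2a]; exact ENNReal.ofReal_lt_top)
    exact this.ne
  set c' : ℝ≥0 := φ2⁻¹.toNNReal with hc'
  have hc : (c' : ℝ≥0∞) = φ2⁻¹ := ENNReal.coe_toNNReal (by simp [h0])
  have hcne0 : (c' : ℝ≥0∞) ≠ 0 := by
    rw [hc]; exact ENNReal.inv_ne_zero.mpr htop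
  set g : ℝ → ℝ≥0∞ := fun x => (c':ℝ≥0∞) * (Set.Ioo (0:ℝ) (2*a)).indicator (fun _ => 1) x
    with hg_def
  have hg : Measurable g := measurable_const.mul hmeas2a
  have hNg : X.N g ≤ 1 := by
    rw [hg_def, X.smul_eq c' _ hmeas2a, hc]
    exact le_of_eq (ENNReal.inv_mul_cancel h0 htop)
  -- level sets of g
  have hlevel : ∀ l : ℝ≥0∞, μI {x | l < g x} = if l < ↑c' then ENNReal.ofReal (2*a) else 0 := by
    intro l
    rw [hg_def]
    rw [show {x | l < (c':ℝ≥0∞) * (Set.Ioo (0:ℝ) (2*a)).indicator (fun _ => 1) x}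
        = if l < ↑c' then Set.Ioo 0 (2*a) else ∅ from levelset_smul_indicator _ _ _]
    split_ifs <;> simp [hμIoo2a]
  -- pointwise formula for the truncated rearrangement of g
  have hrearr : ∀ t : ℝ, (Set.Ioi a).indicator (fun t => rearr μI g t) t
      = (c':ℝ≥0∞) * (Set.Ioo a (2*a)).indicator (fun _ => 1) t := by
    intro t
    by_cases hta : a < t
    · rw [Set.indicator_of_mem (Set.mem_Ioi.mpr hta)]
      have hset : {l : ℝ≥0∞ | μI {x | l < g x} ≤ ENNReal.ofReal t}
          = {l : ℝ≥0∞ | (if l < ↑c' then ENNReal.ofReal (2*a) else 0) ≤ ENNReal.ofReal t} := by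
        ext l; simp [hlevel l]
      rw [rearr, hset]
      have ht0 : (0:ℝ) ≤ t := le_of_lt (lt_trans ha hta)
      by_cases ht2 : t < 2*a
      · have hmem : t ∈ Set.Ioo a (2*a) := ⟨hta, ht2⟩
        rw [Set.indicator_of_mem hmem, mul_one]
        have hs : {l : ℝ≥0∞ | (if l < ↑c' then ENNReal.ofReal (2*a) else 0) ≤ ENNReal.ofReal t}
            = Set.Ici (↑c' : ℝ≥0∞) := by
          ext l
          by_cases hl : l < ↑c'
          · simp only [hl, if_true, mem_setOf_eq, mem_Ici]
            rw [ENNReal.ofReal_le_ofReal_iff ht0]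
            constructor
            · intro h; linarith
            · intro h; exact absurd h (not_le.mpr hl)
          · simp [hl, not_lt.mp hl]
        rw [hs, csInf_Ici]
      · have hmem : t ∉ Set.Ioo a (2*a) := fun h => ht2 h.2
        rw [Set.indicator_of_notMem hmem, mul_zero]
        refine le_antisymm (sInf_le ?_) (zero_le)
        simp only [mem_setOf_eq]
        split_ifs
        · exact ENNReal.ofReal_le_ofReal (not_lt.mp ht2)
        · exact zero_le
    · rw [Set.indicator_of_notMem (show t ∉ Set.Ioi a from fun h => hta h),
        Set.indicator_of_notMem (show t ∉ Set.Ioo a (2*a) from fun h => hta h.1), mul_zero]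
  -- value of Y.N on the truncation
  have hμa : μI (Set.Ioo a (2*a)) = μI (Set.Ioo 0 a) := by
    rw [μI_Ioo a (2*a) ha.le, μI_Ioo 0 a le_rfl, sub_zero]
    norm_num [two_mul]
  have hY : Y.N ((Set.Ioi a).indicator fun t => rearr μI g t) = (c':ℝ≥0∞) * fund Y a := by
    rw [show ((Set.Ioi a).indicator fun t => rearr μI g t)
        = fun t => (c':ℝ≥0∞) * (Set.Ioo a (2*a)).indicator (fun _ => 1) t from funext hrearr,
      Y.smul_eq c' _ (measurable_const.indicator measurableSet_Ioo)]
    congr 1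
    exact N_ind_congr Y measurableSet_Ioo measurableSet_Ioo hμa
  have hS : (c':ℝ≥0∞) * fund Y a ≤ S := by
    rw [← hY, hS_def]
    exact le_iSup_of_le g (le_iSup_of_le hg (le_iSup_of_le hNg le_rfl))
  -- quasiconcavity : φ2 ≤ 2 * fund X a
  have h2 : φ2 ≤ 2 * fund X a := by
    have hvol : ∀ᵐ x ∂(volume : Measure ℝ), x ≠ a := by
      rw [ae_iff]
      have hst : {x : ℝ | ¬ x ≠ a} = {a} := by ext x; simp
      rw [hst]
      exact Real.volume_singleton
    have hne : ∀ᵐ x ∂μI, x ≠ a := ae_mono Measure.restrict_le_self hvol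
    have hmono : X.N ((Set.Ioo (0:ℝ) (2*a)).indicator fun _ => 1)
        ≤ X.N (fun x => (Set.Ioo (0:ℝ) a).indicator (fun _ => (1:ℝ≥0∞)) x
            + (Set.Ioo a (2*a)).indicator (fun _ => (1:ℝ≥0∞)) x) := by
      refine X.mono _ _ hmeas2a
        ((measurable_const.indicator measurableSet_Ioo).add
          (measurable_const.indicator measurableSet_Ioo)) ?_
      filter_upwards [hne] with x hx
      by_cases h1 : x ∈ Set.Ioo (0:ℝ) (2*a)
      · rw [Set.indicator_of_mem h1]
        rcases hx.lt_or_gt with h | h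
        · have hm : x ∈ Set.Ioo (0:ℝ) a := ⟨h1.1, h⟩
          rw [Set.indicator_of_mem hm]; exact le_self_add
        · have hm : x ∈ Set.Ioo a (2*a) := ⟨h, h1.2⟩
          rw [Set.indicator_of_mem hm]; exact le_add_self
      · rw [Set.indicator_of_notMem h1]; exact zero_le
    have hadd := X.add_le ((Set.Ioo (0:ℝ) a).indicator fun _ => (1:ℝ≥0∞))
      ((Set.Ioo a (2*a)).indicator fun _ => (1:ℝ≥0∞))
      (measurable_const.indicator measurableSet_Ioo)
      (measurable_const.indicator measurableSet_Ioo)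
    have heq : X.N ((Set.Ioo a (2*a)).indicator fun _ => (1:ℝ≥0∞)) = fund X a :=
      N_ind_congr X measurableSet_Ioo measurableSet_Ioo hμa
    calc φ2 ≤ _ := hmono
      _ ≤ _ := hadd
      _ = 2 * fund X a := by rw [heq, fund, two_mul]
  -- conclude
  calc fund Y a = ((c':ℝ≥0∞) * fund Y a) * φ2 := by
        rw [mul_right_comm, hc, ENNReal.inv_mul_cancel h0 htop, one_mul]
    _ ≤ S * (2 * fund X a) := mul_le_mul' hS h2
    _ = 2 * S * fund X a := by ring

end
end

section
/- Let M ∈ ℕ and let I_1, …, I_{M+1} be pairwise nonoverlapping bounded intervals in (0,∞), each of length δ > 0. Let ‖·‖_X and ‖·‖_Y be rearrangement-invariant function norms over (0,∞). Then for every nonnegative measurable function g on (0,∞): ‖ Σ_{j=1}^{M} χ_{I_j}(t) · δ^{-1} ∫_{I_j ∪ I_{j+1}} g ‖_Y ≤ 2 ( φ_Y(δ)/φ_X(δ) + sup_{‖f‖_X ≤ 1} ‖f^* χ_{(δ,∞)}‖_Y ) ‖g‖_X, where the supremum is over measurable f on (0,∞) with ‖f‖_X ≤ 1. -/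
open MeasureTheory Set Filter Topology
open scoped ENNReal NNReal

noncomputable section

namespace Avg

variable {α : Type*} [MeasurableSpace α] {μ : Measure α}

lemma dist_antitone (f : α → ℝ≥0∞) : Antitone (fun l => μ {x | l < f x}) := by
  intro a b hab
  exact measure_mono (fun x hx => lt_of_le_of_lt hab hx)

lemma rearr_antitone (f : α → ℝ≥0∞) : Antitone (rearr μ f) := by
  intro a b hab
  exact sInf_le_sInf (fun l hl => le_trans hl (ENNReal.ofReal_le_ofReal hab))

/-- The infimum in the definition of the rearrangement is attained. -/
lemma dist_rearr_le (f : α → ℝ≥0∞) (t : ℝ) :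
    μ {x | rearr μ f t < f x} ≤ ENNReal.ofReal t := by
  set S : Set ℝ≥0∞ := {l : ℝ≥0∞ | μ {x | l < f x} ≤ ENNReal.ofReal t} with hS
  have hne : S.Nonempty := ⟨⊤, by simp [hS]⟩
  obtain ⟨u, hu_anti, hu_tendsto, hu_mem⟩ := exists_seq_tendsto_sInf hne (OrderBot.bddBelow S)
  have hsub : {x | rearr μ f t < f x} ⊆ ⋃ n, {x | u n < f x} := by
    intro x hx
    have : ∀ᶠ n in atTop, u n < f x := hu_tendsto.eventually_lt_const hx
    obtain ⟨n, hn⟩ := this.exists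
    exact mem_iUnion.2 ⟨n, hn⟩
  calc μ {x | rearr μ f t < f x} ≤ μ (⋃ n, {x | u n < f x}) := measure_mono hsub
    _ = ⨆ n, μ {x | u n < f x} := by
        apply Monotone.measure_iUnion
        intro a b hab x hx
        exact lt_of_le_of_lt (hu_anti hab) hx
    _ ≤ ENNReal.ofReal t := iSup_le fun n => hu_mem n

/-- Key equivalence: `f^*(t) > λ ↔ d_f(λ) > t`. -/
lemma lt_rearr_iff (f : α → ℝ≥0∞) (t : ℝ) (l : ℝ≥0∞) :
    l < rearr μ f t ↔ ENNReal.ofReal t < μ {x | l < f x} := by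
  constructor
  · intro h
    by_contra hc
    push_neg at hc
    have hmem : l ∈ {l : ℝ≥0∞ | μ {x | l < f x} ≤ ENNReal.ofReal t} := hc
    exact absurd (sInf_le hmem : rearr μ f t ≤ l) (not_le.2 h)
  · intro h
    by_contra hc
    push_neg at hc
    have := le_trans (dist_antitone f hc) (dist_rearr_le f t)
    exact absurd this (not_le.2 h)

lemma rearr_measurable (f : α → ℝ≥0∞) : Measurable (rearr μ f) :=
  (rearr_antitone f).measurable

lemma rearr_le_of_dist_le (f : α → ℝ≥0∞) {l : ℝ≥0∞} {t : ℝ}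
    (h : μ {x | l < f x} ≤ ENNReal.ofReal t) : rearr μ f t ≤ l :=
  sInf_le (by exact h)

lemma rearr_mono_dist (f g : α → ℝ≥0∞)
    (h : ∀ l, μ {x | l < f x} ≤ μ {x | l < g x}) (t : ℝ) :
    rearr μ f t ≤ rearr μ g t :=
  sInf_le_sInf (fun l hl => le_trans (h l) hl)

/-- volume of `{t > 0 | ofReal t < D}` is `D`. -/
lemma volume_ofReal_lt (D : ℝ≥0∞) :
    volume {t : ℝ | 0 < t ∧ ENNReal.ofReal t < D} = D := by
  rcases eq_or_ne D ⊤ with hD | hD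
  · have : {t : ℝ | 0 < t ∧ ENNReal.ofReal t < D} = Ioi 0 := by
      ext t; simp [hD, ENNReal.ofReal_lt_top, mem_Ioi]
    rw [this, Real.volume_Ioi]
    exact hD.symm
  · have : {t : ℝ | 0 < t ∧ ENNReal.ofReal t < D} = Ioo 0 D.toReal := by
      ext t
      simp only [mem_setOf_eq, mem_Ioo]
      exact and_congr_right fun ht => ENNReal.ofReal_lt_iff_lt_toReal ht.le hD
    rw [this, Real.volume_Ioo, sub_zero, ENNReal.ofReal_toReal hD]

/-- General layer-cake for `ℝ≥0∞`-valued functions. -/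
lemma lintegral_layercake (μ : Measure α) [SigmaFinite μ]
    (f : α → ℝ≥0∞) (hf : Measurable f) :
    ∫⁻ x, f x ∂μ = ∫⁻ l in Ioi (0:ℝ), μ {x | ENNReal.ofReal l < f x} := by
  have hms : MeasurableSet {p : α × ℝ | 0 < p.2 ∧ ENNReal.ofReal p.2 < f p.1} := by
    apply MeasurableSet.inter
    · exact measurable_snd measurableSet_Ioi
    · have h1 : Measurable (fun p : α × ℝ => (ENNReal.ofReal p.2 : ℝ≥0∞)) :=
        ENNReal.measurable_ofReal.comp measurable_snd
      exact measurableSet_lt (α := ℝ≥0∞) h1 (hf.comp measurable_fst)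
  set F : α → ℝ → ℝ≥0∞ := fun x l => if 0 < l ∧ ENNReal.ofReal l < f x then 1 else 0 with hFdef
  have hFmeas : AEMeasurable (Function.uncurry F) (μ.prod volume) := by
    have : Function.uncurry F =
        {p : α × ℝ | 0 < p.2 ∧ ENNReal.ofReal p.2 < f p.1}.indicator (fun _ => (1:ℝ≥0∞)) := by
      funext p
      simp only [Function.uncurry, hFdef, Set.indicator_apply, mem_setOf_eq]
    rw [this]
    exact (Measurable.indicator measurable_const hms).aemeasurable
  calc ∫⁻ x, f x ∂μ
      = ∫⁻ x, ∫⁻ l, F x l ∂volume ∂μ := by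
        apply lintegral_congr; intro x
        have : ∫⁻ l, F x l ∂volume =
            ∫⁻ l, ({p : ℝ | 0 < p ∧ ENNReal.ofReal p < f x}.indicator (fun _ => (1:ℝ≥0∞))) l
              ∂volume := by
          apply lintegral_congr; intro l
          simp only [hFdef, Set.indicator_apply, mem_setOf_eq]
        rw [this]
        have hms' : MeasurableSet {p : ℝ | 0 < p ∧ ENNReal.ofReal p < f x} :=
          (measurableSet_Ioi.inter (ENNReal.measurable_ofReal (measurableSet_Iio (a := f x))))
        rw [lintegral_indicator hms']
        simp only [MeasureTheory.setLIntegral_one]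
        exact (volume_ofReal_lt (f x)).symm
    _ = ∫⁻ l, ∫⁻ x, F x l ∂μ ∂volume := lintegral_lintegral_swap hFmeas
    _ = ∫⁻ l in Ioi (0:ℝ), μ {x | ENNReal.ofReal l < f x} := by
        rw [← lintegral_indicator measurableSet_Ioi]
        apply lintegral_congr; intro l
        by_cases hl : 0 < l
        · have hx : ∀ x : α, F x l =
              ({x : α | ENNReal.ofReal l < f x}.indicator (fun _ => (1:ℝ≥0∞))) x := by
            intro x
            simp only [hFdef, Set.indicator_apply, mem_setOf_eq, hl, true_and]
          rw [lintegral_congr hx,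
            lintegral_indicator (measurableSet_lt (α := ℝ≥0∞) measurable_const hf),
            Set.indicator_of_mem (by exact hl)]
          simp
        · have hx : ∀ x : α, F x l = 0 := by
            intro x
            simp only [hFdef, hl, false_and, if_false]
          rw [lintegral_congr hx, lintegral_zero,
            Set.indicator_of_notMem (by exact hl)]

/-! ### Lemmas specific to `μI` -/

lemma μI_apply (A : Set ℝ) : μI A = volume (A ∩ Ioi 0) :=
  Measure.restrict_apply' measurableSet_Ioi

lemma μI_apply_subset {A : Set ℝ} (hA : A ⊆ Ioi 0) : μI A = volume A := by
  rw [μI_apply, inter_eq_self_of_subset_left hA]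

instance : SigmaFinite μI := by
  unfold μI; infer_instance

/-- the rearrangement is equimeasurable with the function. -/
lemma rearr_dist (f : ℝ → ℝ≥0∞) (l : ℝ≥0∞) :
    μI {t | l < rearr μI f t} = μI {x | l < f x} := by
  have hset : {t : ℝ | l < rearr μI f t} ∩ Ioi 0
      = {t : ℝ | 0 < t ∧ ENNReal.ofReal t < μI {x | l < f x}} := by
    ext t
    simp only [mem_inter_iff, mem_setOf_eq, mem_Ioi]
    rw [lt_rearr_iff, and_comm]
  rw [μI_apply, hset, volume_ofReal_lt]

lemma lintegral_rearr (f : ℝ → ℝ≥0∞) (hf : Measurable f) :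
    ∫⁻ t, rearr μI f t ∂μI = ∫⁻ x, f x ∂μI := by
  rw [lintegral_layercake μI _ (rearr_measurable f), lintegral_layercake μI f hf]
  apply lintegral_congr
  intro l
  exact rearr_dist f (ENNReal.ofReal l)

lemma rearr_smul (f : ℝ → ℝ≥0∞) (c : ℝ≥0∞) (hc0 : c ≠ 0) (hct : c ≠ ⊤) (t : ℝ) :
    rearr μI (fun x => c * f x) t = c * rearr μI f t := by
  apply le_antisymm
  · apply rearr_le_of_dist_le
    have hsub : {x : ℝ | c * rearr μI f t < c * f x} ⊆ {x : ℝ | rearr μI f t < f x} := by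
      intro x hx
      have hx' : c * rearr μI f t < c * f x := hx
      exact lt_of_mul_lt_mul_left hx' zero_le
    exact le_trans (measure_mono hsub) (dist_rearr_le f t)
  · have h1 : μI {x : ℝ | c⁻¹ * rearr μI (fun x => c * f x) t < f x} ≤ ENNReal.ofReal t := by
      have hsub : {x : ℝ | c⁻¹ * rearr μI (fun x => c * f x) t < f x}
          ⊆ {x : ℝ | rearr μI (fun x => c * f x) t < c * f x} := by
        intro x hx
        simp only [mem_setOf_eq] at hx ⊢
        calc rearr μI (fun x => c * f x) t
            = c * (c⁻¹ * rearr μI (fun x => c * f x) t) := by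
              rw [← mul_assoc, ENNReal.mul_inv_cancel hc0 hct, one_mul]
          _ < c * f x := by
              exact (ENNReal.mul_lt_mul_iff_right hc0 hct).2 hx
      exact le_trans (measure_mono hsub) (dist_rearr_le _ t)
    have h2 : rearr μI f t ≤ c⁻¹ * rearr μI (fun x => c * f x) t :=
      rearr_le_of_dist_le f h1
    calc c * rearr μI f t ≤ c * (c⁻¹ * rearr μI (fun x => c * f x) t) :=
          mul_le_mul_right h2 c
      _ = rearr μI (fun x => c * f x) t := by
          rw [← mul_assoc, ENNReal.mul_inv_cancel hc0 hct, one_mul]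

/-! ### Norm helper lemmas -/

lemma N_zero (X : RINorm μI) : X.N (fun _ => 0) = 0 :=
  (X.eq_zero_iff _ measurable_const).2 (Filter.Eventually.of_forall fun _ => rfl)

lemma N_congr_ae (X : RINorm μI) {f g : ℝ → ℝ≥0∞} (hf : Measurable f) (hg : Measurable g)
    (h : f =ᵐ[μI] g) : X.N f = X.N g :=
  le_antisymm (X.mono f g hf hg h.le) (X.mono g f hg hf h.symm.le)

lemma N_sum_le (X : RINorm μI) {ι : Type*} (s : Finset ι) (F : ι → ℝ → ℝ≥0∞)
    (hF : ∀ i, Measurable (F i)) :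
    X.N (fun x => ∑ i ∈ s, F i x) ≤ ∑ i ∈ s, X.N (F i) := by
  classical
  induction s using Finset.induction with
  | empty =>
    simp only [Finset.sum_empty]
    exact le_of_eq (N_zero X)
  | @insert a s ha ih =>
    have hsum : Measurable (fun x => ∑ i ∈ s, F i x) :=
      Finset.measurable_sum s (fun i _ => hF i)
    calc X.N (fun x => ∑ i ∈ insert a s, F i x)
        = X.N (fun x => F a x + ∑ i ∈ s, F i x) := by
          congr 1; funext x; exact Finset.sum_insert ha
      _ ≤ X.N (F a) + X.N (fun x => ∑ i ∈ s, F i x) := X.add_le _ _ (hF a) hsum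
      _ ≤ X.N (F a) + ∑ i ∈ s, X.N (F i) := add_le_add_right ih _
      _ = ∑ i ∈ insert a s, X.N (F i) := (Finset.sum_insert (f := fun i => X.N (F i)) ha).symm

lemma N_liminf_le (X : RINorm μI) (F : ℕ → ℝ → ℝ≥0∞) (hF : ∀ n, Measurable (F n)) :
    X.N (fun x => Filter.liminf (fun n => F n x) Filter.atTop) ≤
      Filter.liminf (fun n => X.N (F n)) Filter.atTop := by
  set H : ℕ → ℝ → ℝ≥0∞ := fun k x => ⨅ (m) (_ : k ≤ m), F m x with hH
  have hHmeas : ∀ k, Measurable (H k) :=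
    fun k => Measurable.iInf (fun m => Measurable.iInf (fun _ => hF m))
  have hmono : ∀ x, Monotone (fun k => H k x) := by
    intro x k k' hk
    exact le_iInf₂ fun m hm => iInf₂_le m (le_trans hk hm)
  have hsup : ∀ x, (⨆ k, H k x) = Filter.liminf (fun n => F n x) Filter.atTop := by
    intro x
    rw [liminf_eq_iSup_iInf_of_nat]
  have hlim : Measurable (fun x => Filter.liminf (fun n => F n x) Filter.atTop) := by
    have : (fun x => Filter.liminf (fun n => F n x) Filter.atTop) = fun x => ⨆ k, H k x := by
      funext x; exact (hsup x).symm
    rw [this]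
    exact Measurable.iSup hHmeas
  have hfatou := X.fatou H _ hHmeas hlim (Filter.Eventually.of_forall hmono)
    (Filter.Eventually.of_forall hsup)
  rw [← hfatou, liminf_eq_iSup_iInf_of_nat]
  apply iSup_le; intro k
  refine le_iSup_of_le k (le_iInf₂ fun m hm => ?_)
  exact X.mono (H k) (F m) (hHmeas k) (hF m)
    (Filter.Eventually.of_forall fun x => iInf₂_le m hm)

lemma N_mono_dist (X : RINorm μI) (f g : ℝ → ℝ≥0∞) (hf : Measurable f) (hg : Measurable g)
    (h : ∀ l, μI {x | l < f x} ≤ μI {x | l < g x}) : X.N f ≤ X.N g := by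
  have hf' : X.N f = X.N (rearr μI f) :=
    X.rearr_invariant f _ hf (rearr_measurable f) (fun l => (rearr_dist f l).symm)
  have hg' : X.N g = X.N (rearr μI g) :=
    X.rearr_invariant g _ hg (rearr_measurable g) (fun l => (rearr_dist g l).symm)
  rw [hf', hg']
  exact X.mono _ _ (rearr_measurable f) (rearr_measurable g)
    (Filter.Eventually.of_forall (rearr_mono_dist f g h))

lemma μI_Ioo (a b : ℝ) (ha : 0 ≤ a) : μI (Ioo a b) = ENNReal.ofReal (b - a) := by
  rw [μI_apply_subset (fun x hx => lt_of_le_of_lt ha hx.1), Real.volume_Ioo]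

lemma fund_ne_zero (X : RINorm μI) {t : ℝ} (ht : 0 < t) : fund X t ≠ 0 := by
  intro h
  have hae := (X.eq_zero_iff _ (measurable_const.indicator measurableSet_Ioo)).1 h
  have h0 := ae_iff.1 hae
  have hset : {x : ℝ | ¬ ((Ioo (0:ℝ) t).indicator (fun _ => (1:ℝ≥0∞)) x = (0 : ℝ → ℝ≥0∞) x)}
      = Ioo 0 t := by
    ext x
    simp [Set.indicator_apply]
  rw [hset, μI_Ioo 0 t le_rfl, sub_zero] at h0
  exact (ENNReal.ofReal_pos.2 ht).ne' h0

lemma fund_ne_top (X : RINorm μI) (t : ℝ) : fund X t ≠ ⊤ := by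
  have := X.indicator_lt_top (Ioo 0 t) measurableSet_Ioo
    (by rw [μI_Ioo 0 t le_rfl]; exact ENNReal.ofReal_lt_top)
  exact this.ne

/-! ### Interval geometry -/

lemma μI_null {A : Set ℝ} (h : volume A = 0) : μI A = 0 := by
  have : μI A ≤ volume A := by
    rw [μI_apply]
    exact measure_mono inter_subset_left
  exact le_antisymm (h ▸ this) (zero_le)

lemma e_nonneg {δ : ℝ} (hδ : 0 < δ) {J : Set ℝ} {e : ℝ}
    (h1 : Ioo e (e + δ) ⊆ J) (hpos : J ⊆ Ioi 0) : 0 ≤ e := by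
  by_contra h
  push_neg at h
  have hmin : 0 < min δ (-e) := lt_min hδ (by linarith)
  have hx : e + min δ (-e) / 2 ∈ Ioo e (e + δ) := by
    constructor
    · linarith
    · have : min δ (-e) ≤ δ := min_le_left _ _
      linarith
  have := hpos (h1 hx)
  have h2 : min δ (-e) ≤ -e := min_le_right _ _
  simp only [mem_Ioi] at this
  linarith

lemma J_measurable {δ : ℝ} {J : Set ℝ} {e : ℝ}
    (h1 : Ioo e (e + δ) ⊆ J) (h2 : J ⊆ Icc e (e + δ)) : MeasurableSet J := by
  have hJ : J = Ioo e (e + δ) ∪ (J ∩ {e, e + δ}) := by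
    ext x
    constructor
    · intro hx
      rcases h2 hx with ⟨hxl, hxr⟩
      rcases eq_or_lt_of_le hxl with h | h
      · exact Or.inr ⟨hx, Or.inl h.symm⟩
      rcases eq_or_lt_of_le hxr with h' | h'
      · exact Or.inr ⟨hx, Or.inr h'⟩
      · exact Or.inl ⟨h, h'⟩
    · rintro (hx | hx)
      · exact h1 hx
      · exact hx.1
  rw [hJ]
  exact measurableSet_Ioo.union
    ((Set.Finite.subset (by simp) inter_subset_right).measurableSet)

lemma volume_J {δ : ℝ} {J : Set ℝ} {e : ℝ}
    (h1 : Ioo e (e + δ) ⊆ J) (h2 : J ⊆ Icc e (e + δ)) :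
    volume J = ENNReal.ofReal δ := by
  apply le_antisymm
  · calc volume J ≤ volume (Icc e (e + δ)) := measure_mono h2
      _ = ENNReal.ofReal δ := by rw [Real.volume_Icc, add_sub_cancel_left]
  · have : volume (Ioo e (e + δ)) = ENNReal.ofReal δ := by
      rw [Real.volume_Ioo, add_sub_cancel_left]
    rw [← this]
    exact measure_mono h1

lemma vol_inter_null {δ : ℝ} (hδ : 0 < δ) {J J' : Set ℝ} {e e' : ℝ}
    (h1 : Ioo e (e + δ) ⊆ J) (h2 : J ⊆ Icc e (e + δ))
    (h1' : Ioo e' (e' + δ) ⊆ J') (h2' : J' ⊆ Icc e' (e' + δ))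
    (hdisj : Ioo e (e + δ) ∩ Ioo e' (e' + δ) = ∅) :
    volume (J ∩ J') = 0 := by
  have hdich : e + δ ≤ e' ∨ e' + δ ≤ e := by
    by_contra h
    push_neg at h
    obtain ⟨ha, hb⟩ := h
    set x := (max e e' + min (e + δ) (e' + δ)) / 2 with hx
    have hmaxmin : max e e' < min (e + δ) (e' + δ) := by
      apply max_lt <;> apply lt_min <;> linarith
    have hx1 : x ∈ Ioo e (e + δ) := by
      constructor
      · have := le_max_left e e'
        have := min_le_left (e + δ) (e' + δ)
        simp only [hx]; linarith
      · have := le_max_left e e'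
        have := min_le_left (e + δ) (e' + δ)
        simp only [hx]; linarith
    have hx2 : x ∈ Ioo e' (e' + δ) := by
      constructor
      · have := le_max_right e e'
        have := min_le_right (e + δ) (e' + δ)
        simp only [hx]; linarith
      · have := le_max_right e e'
        have := min_le_right (e + δ) (e' + δ)
        simp only [hx]; linarith
    have : x ∈ (∅ : Set ℝ) := hdisj ▸ ⟨hx1, hx2⟩
    exact this
  rcases hdich with hle | hle
  · have hsub : J ∩ J' ⊆ Icc e' (e + δ) := by
      rintro x ⟨hxJ, hxJ'⟩
      exact ⟨(h2' hxJ').1, (h2 hxJ).2⟩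
    apply measure_mono_null hsub
    rw [Real.volume_Icc]
    exact ENNReal.ofReal_eq_zero.2 (by linarith)
  · have hsub : J ∩ J' ⊆ Icc e (e' + δ) := by
      rintro x ⟨hxJ, hxJ'⟩
      exact ⟨(h2 hxJ).1, (h2' hxJ').2⟩
    apply measure_mono_null hsub
    rw [Real.volume_Icc]
    exact ENNReal.ofReal_eq_zero.2 (by linarith)

/-- Distribution of a sum of functions supported on disjoint open intervals. -/
lemma dist_sum_Ioo {δ : ℝ} {N : ℕ} (e : Fin N → ℝ) (he : ∀ k, 0 ≤ e k)
    (hdisj : ∀ k k', k ≠ k' → Ioo (e k) (e k + δ) ∩ Ioo (e k') (e k' + δ) = ∅)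
    (W : Fin N → ℝ → ℝ≥0∞) (hW : ∀ k, Measurable (W k)) (l : ℝ≥0∞) :
    μI {x | l < ∑ k, (Ioo (e k) (e k + δ)).indicator (W k) x}
      = ∑ k, volume (Ioo (e k) (e k + δ) ∩ {x | l < W k x}) := by
  have hsum : ∀ (x : ℝ) (k : Fin N), x ∈ Ioo (e k) (e k + δ) →
      (∑ k', (Ioo (e k') (e k' + δ)).indicator (W k') x) = W k x := by
    intro x k hx
    rw [Finset.sum_eq_single k]
    · exact Set.indicator_of_mem hx _
    · intro k' _ hk'
      apply Set.indicator_of_notMem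
      intro hx'
      have : x ∈ (∅ : Set ℝ) := (hdisj k' k hk') ▸ ⟨hx', hx⟩
      exact this
    · intro h; exact absurd (Finset.mem_univ k) h
  have hset : {x : ℝ | l < ∑ k, (Ioo (e k) (e k + δ)).indicator (W k) x}
      = ⋃ k, (Ioo (e k) (e k + δ) ∩ {x | l < W k x}) := by
    ext x
    simp only [mem_setOf_eq, mem_iUnion, mem_inter_iff]
    constructor
    · intro hx
      by_cases hmem : ∃ k, x ∈ Ioo (e k) (e k + δ)
      · obtain ⟨k, hk⟩ := hmem
        exact ⟨k, hk, by rwa [hsum x k hk] at hx⟩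
      · push_neg at hmem
        rw [Finset.sum_eq_zero (fun k _ => Set.indicator_of_notMem (hmem k) _)] at hx
        exact absurd hx (by simp)
    · rintro ⟨k, hk, hlt⟩
      rwa [hsum x k hk]
  rw [hset]
  have hm : ∀ k, MeasurableSet (Ioo (e k) (e k + δ) ∩ {x | l < W k x}) :=
    fun k => measurableSet_Ioo.inter (measurableSet_lt (α := ℝ≥0∞) measurable_const (hW k))
  have hpd : Pairwise (Function.onFun Disjoint
      (fun k => Ioo (e k) (e k + δ) ∩ {x | l < W k x})) := by
    intro k k' hkk'
    apply Set.disjoint_left.2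
    intro x hx hx'
    have : x ∈ (∅ : Set ℝ) := (hdisj k k' hkk') ▸ ⟨hx.1, hx'.1⟩
    exact this
  rw [measure_iUnion hpd hm, tsum_fintype]
  apply Finset.sum_congr rfl
  intro k _
  exact μI_apply_subset (fun x hx => lt_of_le_of_lt (he k) hx.1.1)

lemma dist_sum_const {δ : ℝ} {N : ℕ} (e : Fin N → ℝ) (he : ∀ k, 0 ≤ e k)
    (hdisj : ∀ k k', k ≠ k' → Ioo (e k) (e k + δ) ∩ Ioo (e k') (e k' + δ) = ∅)
    (c : Fin N → ℝ≥0∞) (l : ℝ≥0∞) :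
    μI {x | l < ∑ k, (Ioo (e k) (e k + δ)).indicator (fun _ => c k) x}
      = ∑ k, (if l < c k then ENNReal.ofReal δ else 0) := by
  rw [dist_sum_Ioo e he hdisj _ (fun k => measurable_const) l]
  apply Finset.sum_congr rfl
  intro k _
  by_cases h : l < c k
  · have : {x : ℝ | l < c k} = univ := eq_univ_of_forall (fun x => h)
    rw [this, inter_univ, if_pos h, Real.volume_Ioo, add_sub_cancel_left]
  · have : {x : ℝ | l < c k} = ∅ := eq_empty_of_forall_notMem (fun x => h)
    rw [this, inter_empty, if_neg h, measure_empty]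

/-- Replacing the full intervals by the open intervals is an a.e. modification. -/
lemma sum_indicator_ae {δ : ℝ} {N : ℕ} (J : Fin N → Set ℝ) (e : Fin N → ℝ)
    (h1 : ∀ k, Ioo (e k) (e k + δ) ⊆ J k) (h2 : ∀ k, J k ⊆ Icc (e k) (e k + δ))
    (W : Fin N → ℝ → ℝ≥0∞) :
    (fun x => ∑ k, (J k).indicator (W k) x)
      =ᵐ[μI] (fun x => ∑ k, (Ioo (e k) (e k + δ)).indicator (W k) x) := by
  have hbad : μI (⋃ k, (J k \ Ioo (e k) (e k + δ))) = 0 := by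
    apply μI_null
    apply measure_mono_null (t := ⋃ k, ({e k, e k + δ} : Set ℝ))
    · apply iUnion_mono
      intro k x hx
      rcases (h2 k) hx.1 with ⟨hxl, hxr⟩
      rcases eq_or_lt_of_le hxl with h | h
      · exact Or.inl h.symm
      rcases eq_or_lt_of_le hxr with h' | h'
      · exact Or.inr h'
      · exact absurd ⟨h, h'⟩ hx.2
    · apply measure_iUnion_null
      intro k
      exact Set.Finite.measure_zero (by simp) volume
  have hae : ∀ᵐ x ∂μI, x ∉ ⋃ k, (J k \ Ioo (e k) (e k + δ)) :=
    measure_eq_zero_iff_ae_notMem.1 hbad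
  filter_upwards [hae] with x hx
  apply Finset.sum_congr rfl
  intro k _
  by_cases hmem : x ∈ Ioo (e k) (e k + δ)
  · rw [Set.indicator_of_mem ((h1 k) hmem), Set.indicator_of_mem hmem]
  · have hxJ : x ∉ J k := by
      intro hxJ
      exact hx (mem_iUnion.2 ⟨k, hxJ, hmem⟩)
    rw [Set.indicator_of_notMem hxJ, Set.indicator_of_notMem hmem]

/-! ### Rotations within an interval -/

/-- Rotation by `θ` of `[0,δ)`. -/
def q (δ t θ : ℝ) : ℝ := if t + θ < δ then t + θ else t + θ - δ

lemma q_measurable (δ e θ : ℝ) : Measurable (fun x : ℝ => q δ (x - e) θ) := by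
  unfold q
  apply Measurable.ite
  · exact ((measurable_id.sub_const e).add_const θ) measurableSet_Iio
  · exact (measurable_id.sub_const e).add_const θ
  · exact ((measurable_id.sub_const e).add_const θ).sub_const δ

lemma rot_vol {δ : ℝ} (hδ : 0 < δ) (e θ r : ℝ) (hθ0 : 0 ≤ θ) (hθ : θ < δ)
    (hr0 : 0 ≤ r) (hr : r ≤ δ) :
    volume {x : ℝ | x ∈ Ioo e (e + δ) ∧ q δ (x - e) θ < r} = ENNReal.ofReal r := by
  have hset : {x : ℝ | x ∈ Ioo e (e + δ) ∧ q δ (x - e) θ < r}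
      = Ioo e (e + (r - θ)) ∪ Ico (e + δ - θ) (e + min δ (r + δ - θ)) := by
    ext x
    simp only [mem_setOf_eq, mem_Ioo, mem_union, mem_Ico, q]
    have h3 := min_le_left δ (r + δ - θ)
    have h4 := min_le_right δ (r + δ - θ)
    constructor
    · rintro ⟨⟨hx1, hx2⟩, hq⟩
      split_ifs at hq with hb
      · left; exact ⟨hx1, by linarith⟩
      · push_neg at hb
        right
        refine ⟨by linarith, ?_⟩
        rcases min_cases δ (r + δ - θ) with ⟨hm, _⟩ | ⟨hm, _⟩ <;> rw [hm] <;> linarith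
    · rintro (⟨hx1, hx2⟩ | ⟨hge, hlt⟩)
      · have hb : x - e + θ < δ := by linarith
        rw [if_pos hb]
        exact ⟨⟨hx1, by linarith⟩, by linarith⟩
      · have hb : ¬ (x - e + θ < δ) := by push_neg; linarith
        rw [if_neg hb]
        exact ⟨⟨by linarith, by linarith⟩, by linarith⟩
  rw [hset, measure_union ?_ measurableSet_Ico]
  · rw [Real.volume_Ioo, Real.volume_Ico]
    have h1 : e + (r - θ) - e = r - θ := by ring
    rw [h1]
    rcases le_or_gt θ r with hc | hc
    · have hmin : min δ (r + δ - θ) = δ := min_eq_left (by linarith)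
      rw [hmin]
      have h2 : e + δ - (e + δ - θ) = θ := by ring
      rw [h2, ← ENNReal.ofReal_add (by linarith) hθ0]
      congr 1; ring
    · have hmin : min δ (r + δ - θ) = r + δ - θ := min_eq_right (by linarith)
      rw [hmin]
      have h2 : e + (r + δ - θ) - (e + δ - θ) = r := by ring
      rw [h2, ENNReal.ofReal_eq_zero.2 (by linarith : r - θ ≤ 0), zero_add]
  · apply Set.disjoint_left.2
    rintro x ⟨hx1, hx2⟩ ⟨hge, _⟩
    simp only [mem_Ioo] at *
    linarith

/-- Distribution of the rotated rearrangement on one interval. -/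
lemma rot_dist_piece {δ : ℝ} (hδ : 0 < δ) (f : ℝ → ℝ≥0∞)
    (hD : ∀ l, μI {x | l < f x} ≤ ENNReal.ofReal δ)
    (e θ : ℝ) (hθ0 : 0 ≤ θ) (hθ : θ < δ) (l : ℝ≥0∞) :
    volume (Ioo e (e + δ) ∩ {x | l < rearr μI f (q δ (x - e) θ)}) = μI {x | l < f x} := by
  set D := μI {x | l < f x} with hDdef
  have hDt : D ≠ ⊤ := (lt_of_le_of_lt (hD l) ENNReal.ofReal_lt_top).ne
  have hrr : D.toReal ≤ δ := ENNReal.toReal_le_of_le_ofReal hδ.le (hD l)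
  have hiff : ∀ s : ℝ, 0 ≤ s → (l < rearr μI f s ↔ s < D.toReal) := by
    intro s hs
    rw [lt_rearr_iff, ← hDdef]
    exact ENNReal.ofReal_lt_iff_lt_toReal hs hDt
  have hq0 : ∀ x, x ∈ Ioo e (e + δ) → 0 ≤ q δ (x - e) θ := by
    intro x hx
    simp only [mem_Ioo] at hx
    unfold q
    split_ifs with hb
    · linarith
    · push_neg at hb; linarith
  have hset : Ioo e (e + δ) ∩ {x | l < rearr μI f (q δ (x - e) θ)}
      = {x : ℝ | x ∈ Ioo e (e + δ) ∧ q δ (x - e) θ < D.toReal} := by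
    ext x
    simp only [mem_inter_iff, mem_setOf_eq]
    exact and_congr_right fun hx => hiff _ (hq0 x hx)
  rw [hset, rot_vol hδ e θ D.toReal hθ0 hθ ENNReal.toReal_nonneg hrr,
    ENNReal.ofReal_toReal hDt]

lemma setLIntegral_biUnion_le {ι : Type*} (s : Finset ι) (A : ι → Set ℝ) (f : ℝ → ℝ≥0∞) :
    ∫⁻ x in ⋃ i ∈ s, A i, f x ≤ ∑ i ∈ s, ∫⁻ x in A i, f x := by
  classical
  induction s using Finset.induction with
  | empty => simp
  | @insert a s ha ih =>
    rw [Finset.set_biUnion_insert, Finset.sum_insert ha]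
    exact le_trans (lintegral_union_le _ _ _) (add_le_add_right ih _)

/-- Bound on `c` from eventually below. -/
lemma le_liminf_aux (c : ℝ≥0∞) (m : ℕ) (a : ℕ → ℝ≥0∞)
    (h : ∀ n : ℕ, c ≤ (m : ℝ≥0∞) / ((n : ℝ≥0∞) + 1) + a n) :
    c ≤ Filter.liminf a Filter.atTop := by
  have tend0 : Filter.Tendsto (fun n : ℕ => (m : ℝ≥0∞) / ((n : ℝ≥0∞) + 1))
      Filter.atTop (nhds 0) := by
    have h1 : Filter.Tendsto (fun n : ℕ => ((n + 1 : ℕ) : ℝ≥0∞)⁻¹) Filter.atTop (nhds 0) :=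
      ENNReal.tendsto_inv_nat_nhds_zero.comp (Filter.tendsto_add_atTop_nat 1)
    have h2 := ENNReal.Tendsto.const_mul h1 (Or.inr (ENNReal.natCast_ne_top m))
    rw [mul_zero] at h2
    convert h2 using 2 with n
    rw [ENNReal.div_eq_inv_mul, mul_comm]
    push_cast
    rfl
  apply ENNReal.le_of_forall_pos_le_add
  intro ε hε _
  have hev : ∀ᶠ (n : ℕ) in Filter.atTop, (m : ℝ≥0∞) / ((n : ℝ≥0∞) + 1) < (ε : ℝ≥0∞) :=
    Filter.Tendsto.eventually_lt_const (by exact_mod_cast hε) tend0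
  have hev2 : ∀ᶠ n in Filter.atTop, c - (ε : ℝ≥0∞) ≤ a n := by
    filter_upwards [hev] with n hn
    rw [tsub_le_iff_left]
    exact le_trans (h n) (add_le_add_left hn.le _)
  have := Filter.le_liminf_of_le (by isBoundedDefault) hev2
  calc c ≤ c - (ε : ℝ≥0∞) + (ε : ℝ≥0∞) := le_tsub_add
    _ ≤ Filter.liminf a Filter.atTop + (ε : ℝ≥0∞) := add_le_add_left this _

open Fin.NatCast in
/-- Darboux-type estimate: the rotated Riemann sum of an antitone function nearly
dominates the integral. -/
lemma darboux {δ : ℝ} (hδ : 0 < δ) (w : ℝ → ℝ≥0∞) (hw : Antitone w) (m : ℕ)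
    (hwm : ∀ t, w t ≤ (m : ℝ≥0∞)) (n : ℕ) (hn : 1 ≤ n) (t : ℝ) (ht : t ∈ Ioo 0 δ) :
    ∫⁻ s in Ioo (0:ℝ) δ, w s ≤
      ENNReal.ofReal (δ/n) * (m : ℝ≥0∞) +
        ∑ i ∈ Finset.range n, ENNReal.ofReal (δ/n) * w (q δ t (i * (δ/n))) := by
  obtain ⟨ht0, htδ⟩ := ht
  have hnR : (0:ℝ) < n := by exact_mod_cast hn
  set cc : ℝ := δ / n with hcc
  have hccpos : 0 < cc := div_pos hδ hnR
  have hncc : (n : ℝ) * cc = δ := by rw [hcc]; field_simp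
  have hfloor1 : ∀ y : ℝ, 0 < y → (⌊y / cc⌋₊ : ℝ) * cc ≤ y := by
    intro y hy
    have h := Nat.floor_le (le_of_lt (div_pos hy hccpos))
    have h2 := mul_le_mul_of_nonneg_right h hccpos.le
    rwa [div_mul_cancel₀ _ hccpos.ne'] at h2
  have hfloor2 : ∀ y : ℝ, 0 < y → y < ((⌊y / cc⌋₊ : ℝ) + 1) * cc := by
    intro y hy
    have h := Nat.lt_floor_add_one (y / cc)
    have h2 := mul_lt_mul_of_pos_right h hccpos
    rwa [div_mul_cancel₀ _ hccpos.ne'] at h2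
  set j₀ : ℕ := ⌊t / cc⌋₊ with hj₀
  set t₀ : ℝ := t - j₀ * cc with ht₀
  have hj₀le : (j₀ : ℝ) * cc ≤ t := hfloor1 t ht0
  have ht₀0 : 0 ≤ t₀ := by simp only [ht₀]; linarith
  have ht₀cc : t₀ < cc := by
    have h2 := hfloor2 t ht0
    simp only [ht₀]; nlinarith
  have hj₀n : j₀ < n := by
    rw [hj₀, Nat.floor_lt (le_of_lt (div_pos ht0 hccpos))]
    rw [div_lt_iff₀ hccpos]
    calc t < δ := htδ
      _ = (n:ℝ) * cc := hncc.symm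
  -- Step A : rewrite the rotated sum as a cyclic sum over grid points
  have hq_eq : ∀ i : ℕ, i < n → q δ t (i * cc) = t₀ + (((j₀ + i) % n : ℕ) : ℝ) * cc := by
    intro i hi
    have hti : t + i * cc = t₀ + ((j₀ : ℝ) + i) * cc := by simp only [ht₀]; ring
    rcases lt_or_ge (j₀ + i) n with hcase | hcase
    · have hmod : (j₀ + i) % n = j₀ + i := Nat.mod_eq_of_lt hcase
      have hb : t + i * cc < δ := by
        have : ((j₀ : ℝ) + i) * cc ≤ ((n : ℝ) - 1) * cc := by
          apply mul_le_mul_of_nonneg_right _ hccpos.le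
          have : (j₀ : ℝ) + i ≤ (n : ℝ) - 1 := by
            have : (j₀ + i + 1 : ℕ) ≤ n := hcase
            have := (Nat.cast_le (α := ℝ)).2 this
            push_cast at this ⊢
            linarith
          exact this
        calc t + i * cc = t₀ + ((j₀ : ℝ) + i) * cc := hti
          _ ≤ t₀ + ((n : ℝ) - 1) * cc := by linarith
          _ < cc + ((n : ℝ) - 1) * cc := by linarith
          _ = δ := by rw [← hncc]; ring
      unfold q
      rw [if_pos hb, hmod, hti]
      push_cast
      ring
    · have hlt2n : j₀ + i < 2 * n := by omega
      have hmod : (j₀ + i) % n = j₀ + i - n := by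
        rw [Nat.mod_eq_sub_mod hcase, Nat.mod_eq_of_lt (by omega)]
      have hb : ¬ (t + i * cc < δ) := by
        push_neg
        have : ((n:ℝ)) * cc ≤ ((j₀ : ℝ) + i) * cc := by
          apply mul_le_mul_of_nonneg_right _ hccpos.le
          exact_mod_cast hcase
        calc δ = (n:ℝ) * cc := hncc.symm
          _ ≤ ((j₀:ℝ) + i) * cc := this
          _ ≤ t₀ + ((j₀:ℝ) + i) * cc := by linarith
          _ = t + i * cc := hti.symm
      unfold q
      rw [if_neg hb, hmod]
      have : ((j₀ + i - n : ℕ) : ℝ) = (j₀ : ℝ) + i - n := by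
        have h5 : ((j₀ + i - n : ℕ) : ℝ) = ((j₀ + i : ℕ) : ℝ) - (n:ℕ) := Nat.cast_sub hcase
        push_cast at h5 ⊢
        linarith
      rw [this, hti, ← hncc]
      ring
  have hsumA : ∑ i ∈ Finset.range n, w (q δ t (i * cc))
      = ∑ j ∈ Finset.range n, w (t₀ + j * cc) := by
    haveI : NeZero n := ⟨by omega⟩
    have h1 : ∑ i ∈ Finset.range n, w (q δ t (i * cc))
        = ∑ i : Fin n, w (t₀ + (((j₀ + i.val) % n : ℕ) : ℝ) * cc) := by
      rw [Finset.sum_range (fun i => w (q δ t (i * cc)))]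
      apply Finset.sum_congr rfl
      intro i _
      rw [hq_eq i.val i.isLt]
    have h2 : ∀ i : Fin n, (j₀ + i.val) % n = (((j₀ : Fin n) + i : Fin n) : ℕ) := by
      intro i
      rw [Fin.val_add]
      have hv : ((j₀ : Fin n) : ℕ) = j₀ % n := Fin.val_natCast j₀ n
      rw [hv, Nat.mod_add_mod]
    have h3 : ∑ i : Fin n, w (t₀ + (((j₀ + i.val) % n : ℕ) : ℝ) * cc)
        = ∑ i : Fin n, w (t₀ + ((((j₀ : Fin n) + i : Fin n) : ℕ) : ℝ) * cc) := by
      apply Finset.sum_congr rfl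
      intro i _
      rw [h2 i]
    have h4 : ∑ i : Fin n, w (t₀ + ((((j₀ : Fin n) + i : Fin n) : ℕ) : ℝ) * cc)
        = ∑ j : Fin n, w (t₀ + ((j : ℕ) : ℝ) * cc) :=
      Equiv.sum_comp (Equiv.addLeft (j₀ : Fin n)) (fun j => w (t₀ + ((j : ℕ) : ℝ) * cc))
    rw [h1, h3, h4, Finset.sum_range (fun j => w (t₀ + (j : ℝ) * cc))]
  -- Step B : Darboux estimate
  have hcover : Ioo (0:ℝ) δ ⊆ ⋃ j ∈ Finset.range n, Ico ((j:ℝ) * cc) ((j+1:ℝ) * cc) := by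
    intro x hx
    obtain ⟨hx0, hxδ⟩ := hx
    have hfl : ⌊x / cc⌋₊ < n := by
      rw [Nat.floor_lt (le_of_lt (div_pos hx0 hccpos)), div_lt_iff₀ hccpos]
      calc x < δ := hxδ
        _ = (n:ℝ) * cc := hncc.symm
    refine mem_biUnion (Finset.mem_range.2 hfl) ?_
    exact ⟨hfloor1 x hx0, hfloor2 x hx0⟩
  have hcell : ∀ j : ℕ, ∫⁻ s in Ico ((j:ℝ) * cc) ((j+1:ℝ) * cc), w s
      ≤ ENNReal.ofReal cc * w ((j:ℝ) * cc) := by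
    intro j
    calc ∫⁻ s in Ico ((j:ℝ) * cc) ((j+1:ℝ) * cc), w s
        ≤ ∫⁻ _ in Ico ((j:ℝ) * cc) ((j+1:ℝ) * cc), w ((j:ℝ) * cc) := by
          apply setLIntegral_mono measurable_const
          intro s hs
          exact hw hs.1
      _ = w ((j:ℝ) * cc) * volume (Ico ((j:ℝ) * cc) ((j+1:ℝ) * cc)) := by
          rw [setLIntegral_const]
      _ = ENNReal.ofReal cc * w ((j:ℝ) * cc) := by
          rw [Real.volume_Ico, mul_comm]
          congr 2
          ring
  calc ∫⁻ s in Ioo (0:ℝ) δ, w s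
      ≤ ∫⁻ s in ⋃ j ∈ Finset.range n, Ico ((j:ℝ) * cc) ((j+1:ℝ) * cc), w s :=
        lintegral_mono_set hcover
    _ ≤ ∑ j ∈ Finset.range n, ∫⁻ s in Ico ((j:ℝ) * cc) ((j+1:ℝ) * cc), w s :=
        setLIntegral_biUnion_le _ _ _
    _ ≤ ∑ j ∈ Finset.range n, ENNReal.ofReal cc * w ((j:ℝ) * cc) :=
        Finset.sum_le_sum (fun j _ => hcell j)
    _ ≤ ENNReal.ofReal cc * (m : ℝ≥0∞) +
          ∑ j ∈ Finset.range n, ENNReal.ofReal cc * w (t₀ + (j:ℝ) * cc) := by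
        obtain ⟨n', rfl⟩ : ∃ n', n = n' + 1 := ⟨n - 1, by omega⟩
        rw [Finset.sum_range_succ' (fun j => ENNReal.ofReal cc * w ((j:ℝ) * cc)) n',
          add_comm (ENNReal.ofReal cc * (m : ℝ≥0∞))]
        apply add_le_add
        case h₂ =>
          simp only [Nat.cast_zero, zero_mul]
          exact mul_le_mul_right (hwm 0) _
        case h₁ =>
          have hterm : ∀ j : ℕ, ENNReal.ofReal cc * w (((j+1 : ℕ):ℝ) * cc)
              ≤ ENNReal.ofReal cc * w (t₀ + (j:ℝ) * cc) := by
            intro j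
            apply mul_le_mul_right
            apply hw
            push_cast
            nlinarith
          calc ∑ j ∈ Finset.range n', ENNReal.ofReal cc * w (((j+1 : ℕ):ℝ) * cc)
              ≤ ∑ j ∈ Finset.range n', ENNReal.ofReal cc * w (t₀ + (j:ℝ) * cc) :=
                Finset.sum_le_sum (fun j _ => hterm j)
            _ ≤ ∑ j ∈ Finset.range (n'+1), ENNReal.ofReal cc * w (t₀ + (j:ℝ) * cc) := by
                apply Finset.sum_le_sum_of_subset
                exact Finset.range_subset_range.2 (by omega)
    _ = ENNReal.ofReal cc * (m : ℝ≥0∞) +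
          ∑ i ∈ Finset.range n, ENNReal.ofReal cc * w (q δ t (i * cc)) := by
        congr 1
        rw [← Finset.mul_sum, ← Finset.mul_sum, hsumA]

/-- Lemma B (bounded case): the averaging operator over nonoverlapping intervals of equal
length is a contraction on any r.i. norm. -/
lemma lemB_bdd {δ : ℝ} (hδ : 0 < δ) {N : ℕ} (J : Fin N → Set ℝ) (e : Fin N → ℝ)
    (h1 : ∀ k, Ioo (e k) (e k + δ) ⊆ J k) (h2 : ∀ k, J k ⊆ Icc (e k) (e k + δ))
    (hpos : ∀ k, J k ⊆ Ioi 0)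
    (hdisj : ∀ k k', k ≠ k' → Ioo (e k) (e k + δ) ∩ Ioo (e k') (e k' + δ) = ∅)
    (X : RINorm μI) (g : ℝ → ℝ≥0∞) (hg : Measurable g) (m : ℕ) (hgm : ∀ x, g x ≤ (m : ℝ≥0∞)) :
    X.N (fun x => ∑ k, (J k).indicator
      (fun _ => (ENNReal.ofReal δ)⁻¹ * ∫⁻ s in J k, g s) x) ≤ X.N g := by
  have he : ∀ k, 0 ≤ e k := fun k => e_nonneg hδ (h1 k) (hpos k)
  have hJm : ∀ k, MeasurableSet (J k) := fun k => J_measurable (h1 k) (h2 k)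
  set gk : Fin N → ℝ → ℝ≥0∞ := fun k => (J k).indicator g with hgk
  have hgkm : ∀ k, Measurable (gk k) := fun k => hg.indicator (hJm k)
  set w : Fin N → ℝ → ℝ≥0∞ := fun k => rearr μI (gk k) with hw
  have hwm : ∀ k, Measurable (w k) := fun k => rearr_measurable (gk k)
  have hgk_le : ∀ k x, gk k x ≤ (m : ℝ≥0∞) := by
    intro k x
    by_cases hx : x ∈ J k
    · rw [hgk]; simp only [Set.indicator_of_mem hx]; exact hgm x
    · rw [hgk]; simp only [Set.indicator_of_notMem hx]; exact zero_le
  have hwle : ∀ k t, w k t ≤ (m : ℝ≥0∞) := by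
    intro k t
    apply rearr_le_of_dist_le
    have : {x : ℝ | (m : ℝ≥0∞) < gk k x} = ∅ :=
      eq_empty_of_forall_notMem (fun x hx => absurd hx (not_lt.2 (hgk_le k x)))
    rw [this, measure_empty]
    exact zero_le
  have hDle : ∀ k l, μI {x | l < gk k x} ≤ ENNReal.ofReal δ := by
    intro k l
    have hsub : {x | l < gk k x} ⊆ J k := by
      intro x hx
      by_contra hxJ
      rw [hgk] at hx
      simp only [mem_setOf_eq, Set.indicator_of_notMem hxJ] at hx
      exact absurd hx (by simp)
    calc μI {x | l < gk k x} ≤ μI (J k) := measure_mono hsub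
      _ = volume (J k) := μI_apply_subset (hpos k)
      _ = ENNReal.ofReal δ := volume_J (h1 k) (h2 k)
  set c : Fin N → ℝ≥0∞ := fun k => (ENNReal.ofReal δ)⁻¹ * ∫⁻ s in J k, g s with hc
  have hint : ∀ k, ∫⁻ s in J k, g s = ∫⁻ x, gk k x ∂μI := by
    intro k
    rw [hgk]
    rw [lintegral_indicator (hJm k)]
    show (∫⁻ s in J k, g s) = ∫⁻ x in J k, g x ∂μI
    unfold μI
    rw [Measure.restrict_restrict (hJm k), inter_eq_self_of_subset_left (hpos k)]
  have hwzero : ∀ k, ∀ s : ℝ, δ ≤ s → w k s = 0 := by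
    intro k s hs
    refine le_antisymm ?_ (zero_le)
    apply rearr_le_of_dist_le
    exact le_trans (hDle k 0) (ENNReal.ofReal_le_ofReal hs)
  have hwint : ∀ k, ∫⁻ s in Ioo (0:ℝ) δ, w k s = ∫⁻ s in J k, g s := by
    intro k
    have h0 : ∫⁻ t, w k t ∂μI = ∫⁻ x, gk k x ∂μI := lintegral_rearr (gk k) (hgkm k)
    have h1' : ∫⁻ t, w k t ∂μI = ∫⁻ t in Ioi (0:ℝ), w k t := rfl
    have hdisj2 : Disjoint (Ioo (0:ℝ) δ) (Ici δ) :=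
      Set.disjoint_left.2 (fun x hx hx' => absurd hx.2 (not_lt.2 hx'))
    have h2' := lintegral_union (μ := volume) (f := w k) measurableSet_Ici hdisj2
    rw [Ioo_union_Ici_eq_Ioi hδ] at h2'
    have h3' : ∫⁻ t in Ici δ, w k t = 0 := by
      rw [setLIntegral_congr_fun measurableSet_Ici
        (fun s hs => hwzero k s hs)]
      simp
    rw [hint k, ← h0, h1', h2', h3']
    simp
  set Vf : ℝ → ℝ → ℝ≥0∞ := fun θ x =>
    ∑ k, (Ioo (e k) (e k + δ)).indicator (fun y => w k (q δ (y - e k) θ)) x with hVf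
  have hVmeas : ∀ θ, Measurable (Vf θ) := by
    intro θ
    apply Finset.measurable_sum
    intro k _
    exact (((hwm k).comp (q_measurable δ (e k) θ)).indicator measurableSet_Ioo)
  have hVval : ∀ θ (k : Fin N) (x : ℝ), x ∈ Ioo (e k) (e k + δ) →
      Vf θ x = w k (q δ (x - e k) θ) := by
    intro θ k x hx
    simp only [hVf]
    rw [Finset.sum_eq_single k]
    · exact Set.indicator_of_mem hx _
    · intro k' _ hk'
      apply Set.indicator_of_notMem
      intro hx'
      exact absurd (mem_inter hx' hx) (by rw [hdisj k' k hk']; exact notMem_empty x)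
    · intro h; exact absurd (Finset.mem_univ k) h
  have hVdist : ∀ θ, 0 ≤ θ → θ < δ → ∀ l,
      μI {x | l < Vf θ x} = ∑ k, μI {x | l < gk k x} := by
    intro θ hθ0 hθ l
    simp only [hVf]
    rw [dist_sum_Ioo e he hdisj (fun k y => w k (q δ (y - e k) θ))
      (fun k => (hwm k).comp (q_measurable δ (e k) θ)) l]
    apply Finset.sum_congr rfl
    intro k _
    exact rot_dist_piece hδ (gk k) (hDle k) (e k) θ hθ0 hθ l
  -- the averaged rotations
  set A : ℕ → ℝ → ℝ≥0∞ := fun n x =>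
    ((n : ℝ≥0∞))⁻¹ * ∑ i ∈ Finset.range n, Vf (i * (δ / n)) x with hA
  have hAmeas : ∀ n, Measurable (A n) := by
    intro n
    apply Measurable.const_mul
    exact Finset.measurable_sum _ (fun i _ => hVmeas _)
  have hθmem : ∀ n : ℕ, 1 ≤ n → ∀ i : ℕ, i < n → 0 ≤ (i : ℝ) * (δ / n) ∧ (i : ℝ) * (δ / n) < δ := by
    intro n hn i hi
    have hnR : (0:ℝ) < n := by exact_mod_cast hn
    constructor
    · positivity
    · have hlt : (i : ℝ) * (δ / n) < (n : ℝ) * (δ / n) := by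
        apply mul_lt_mul_of_pos_right _ (div_pos hδ hnR)
        exact_mod_cast hi
      have heq : (n : ℝ) * (δ / n) = δ := by field_simp
      linarith
  have hVnorm : ∀ θ, 0 ≤ θ → θ < δ → X.N (Vf θ) = X.N (Vf 0) := by
    intro θ hθ0 hθ
    apply X.rearr_invariant _ _ (hVmeas θ) (hVmeas 0)
    intro l
    rw [hVdist θ hθ0 hθ l, hVdist 0 le_rfl hδ l]
  have hAnorm : ∀ n : ℕ, 1 ≤ n → X.N (A n) ≤ X.N (Vf 0) := by
    intro n hn
    have hn0 : (n : ℝ≥0) ≠ 0 := Nat.cast_ne_zero.2 (by omega)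
    have hcoe : (((n : ℝ≥0)⁻¹ : ℝ≥0) : ℝ≥0∞) = ((n : ℝ≥0∞))⁻¹ := by
      rw [ENNReal.coe_inv hn0, ENNReal.coe_natCast]
    have hrw : A n = fun x => (((n : ℝ≥0)⁻¹ : ℝ≥0) : ℝ≥0∞) *
        ((fun x => ∑ i ∈ Finset.range n, Vf (i * (δ / n)) x) x) := by
      funext x
      rw [hA, hcoe]
    rw [hrw, X.smul_eq _ _ (Finset.measurable_sum _ (fun i _ => hVmeas _)), hcoe]
    calc ((n : ℝ≥0∞))⁻¹ * X.N (fun x => ∑ i ∈ Finset.range n, Vf (i * (δ / n)) x)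
        ≤ ((n : ℝ≥0∞))⁻¹ * ∑ i ∈ Finset.range n, X.N (Vf (i * (δ / n))) :=
          mul_le_mul_right (N_sum_le X _ _ (fun i => hVmeas _)) _
      _ = ((n : ℝ≥0∞))⁻¹ * ∑ i ∈ Finset.range n, X.N (Vf 0) := by
          congr 1
          apply Finset.sum_congr rfl
          intro i hi
          exact hVnorm _ (hθmem n hn i (Finset.mem_range.1 hi)).1
            (hθmem n hn i (Finset.mem_range.1 hi)).2
      _ = ((n : ℝ≥0∞))⁻¹ * ((n : ℝ≥0∞) * X.N (Vf 0)) := by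
          rw [Finset.sum_const, Finset.card_range, nsmul_eq_mul]
      _ = X.N (Vf 0) := by
          rw [← mul_assoc, ENNReal.inv_mul_cancel (by exact_mod_cast hn0)
            (ENNReal.natCast_ne_top n), one_mul]
  -- key pointwise estimate
  have hkey : ∀ n : ℕ, 1 ≤ n → ∀ k : Fin N, ∀ x ∈ Ioo (e k) (e k + δ),
      c k ≤ (m : ℝ≥0∞) / (n : ℝ≥0∞) + A n x := by
    intro n hn k x hx
    have hnR : (0:ℝ) < n := by exact_mod_cast hn
    have ht : x - e k ∈ Ioo (0:ℝ) δ := by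
      obtain ⟨hx1, hx2⟩ := hx
      exact ⟨by linarith, by linarith⟩
    have hdar := darboux hδ (w k) (rearr_antitone (gk k)) m (hwle k) n hn (x - e k) ht
    have hP : ENNReal.ofReal (δ / n) = ENNReal.ofReal δ * ((n : ℝ≥0∞))⁻¹ := by
      rw [div_eq_mul_inv, ENNReal.ofReal_mul hδ.le,
        ENNReal.ofReal_inv_of_pos hnR, ENNReal.ofReal_natCast]
    have hδ0 : ENNReal.ofReal δ ≠ 0 := (ENNReal.ofReal_pos.2 hδ).ne'
    have hδt : ENNReal.ofReal δ ≠ ⊤ := ENNReal.ofReal_ne_top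
    have hsum_eq : ∑ i ∈ Finset.range n, ENNReal.ofReal (δ/n) * w k (q δ (x - e k) (i * (δ/n)))
        = ENNReal.ofReal (δ/n) * ∑ i ∈ Finset.range n, Vf (i * (δ / n)) x := by
      rw [Finset.mul_sum]
      apply Finset.sum_congr rfl
      intro i _
      rw [hVval _ k x hx]
    rw [hsum_eq] at hdar
    have step : c k ≤ (ENNReal.ofReal δ)⁻¹ *
        (ENNReal.ofReal (δ/n) * (m : ℝ≥0∞) +
          ENNReal.ofReal (δ/n) * ∑ i ∈ Finset.range n, Vf (i * (δ / n)) x) := by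
      rw [hc]
      simp only
      rw [← hwint k]
      exact mul_le_mul_right hdar _
    calc c k ≤ (ENNReal.ofReal δ)⁻¹ *
        (ENNReal.ofReal (δ/n) * (m : ℝ≥0∞) +
          ENNReal.ofReal (δ/n) * ∑ i ∈ Finset.range n, Vf (i * (δ / n)) x) := step
      _ = (ENNReal.ofReal δ)⁻¹ * (ENNReal.ofReal δ *
          (((n : ℝ≥0∞))⁻¹ * (m : ℝ≥0∞) +
            ((n : ℝ≥0∞))⁻¹ * ∑ i ∈ Finset.range n, Vf (i * (δ / n)) x)) := by
          rw [hP]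
          congr 1
          rw [mul_add, ← mul_assoc, ← mul_assoc]
      _ = ((n : ℝ≥0∞))⁻¹ * (m : ℝ≥0∞) + A n x := by
          rw [← mul_assoc, ENNReal.inv_mul_cancel hδ0 hδt, one_mul, hA]
      _ = (m : ℝ≥0∞) / (n : ℝ≥0∞) + A n x := by
          rw [ENNReal.div_eq_inv_mul]
  -- pass to the liminf
  set G : ℝ → ℝ≥0∞ := fun x => Filter.liminf (fun nn : ℕ => A (nn + 1) x) Filter.atTop with hG
  have hGmeas : Measurable G := Measurable.liminf (fun nn => hAmeas (nn + 1))
  have hcG : ∀ k : Fin N, ∀ x ∈ Ioo (e k) (e k + δ), c k ≤ G x := by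
    intro k x hx
    apply le_liminf_aux (c k) m (fun nn => A (nn + 1) x)
    intro nn
    have := hkey (nn + 1) (by omega) k x hx
    have hcast : ((nn + 1 : ℕ) : ℝ≥0∞) = (nn : ℝ≥0∞) + 1 := by push_cast; rfl
    rwa [hcast] at this
  set E : ℝ → ℝ≥0∞ := fun x => ∑ k, (Ioo (e k) (e k + δ)).indicator (fun _ => c k) x with hE
  have hEmeas : Measurable E :=
    Finset.measurable_sum _ (fun k _ => measurable_const.indicator measurableSet_Ioo)
  have hEG : ∀ x, E x ≤ G x := by
    intro x
    by_cases hmem : ∃ k, x ∈ Ioo (e k) (e k + δ)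
    · obtain ⟨k, hk⟩ := hmem
      have : E x = c k := by
        rw [hE]
        simp only
        rw [Finset.sum_eq_single k]
        · exact Set.indicator_of_mem hk _
        · intro k' _ hk'
          apply Set.indicator_of_notMem
          intro hx'
          exact absurd (mem_inter hx' hk) (by rw [hdisj k' k hk']; exact notMem_empty x)
        · intro h; exact absurd (Finset.mem_univ k) h
      rw [this]
      exact hcG k x hk
    · push_neg at hmem
      have : E x = 0 := by
        rw [hE]
        simp only
        exact Finset.sum_eq_zero (fun k _ => Set.indicator_of_notMem (hmem k) _)
      rw [this]
      exact zero_le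
  -- norm comparison of V 0 with g
  have hV0g : X.N (Vf 0) ≤ X.N g := by
    apply N_mono_dist X (Vf 0) g (hVmeas 0) hg
    intro l
    rw [hVdist 0 le_rfl hδ l]
    have hpieces : ∀ k, {x | l < gk k x} = {x | l < g x} ∩ J k := by
      intro k
      ext x
      simp only [mem_setOf_eq, mem_inter_iff, hgk]
      by_cases hx : x ∈ J k
      · simp [Set.indicator_of_mem hx, hx]
      · simp [Set.indicator_of_notMem hx, hx]
    calc ∑ k, μI {x | l < gk k x}
        = ∑ k ∈ Finset.univ, μI ({x | l < g x} ∩ J k) := by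
          apply Finset.sum_congr rfl
          intro k _
          rw [hpieces k]
      _ = μI (⋃ k ∈ Finset.univ, ({x | l < g x} ∩ J k)) := by
          rw [measure_biUnion_finset₀]
          · intro k _ k' _ hkk'
            have hsub : ({x | l < g x} ∩ J k) ∩ ({x | l < g x} ∩ J k') ⊆ J k ∩ J k' :=
              fun y hy => ⟨hy.1.2, hy.2.2⟩
            exact measure_mono_null hsub (μI_null (vol_inter_null hδ (h1 k) (h2 k)
              (h1 k') (h2 k') (hdisj k k' hkk')))
          · intro k _
            exact ((measurableSet_lt (α := ℝ≥0∞) measurable_const hg).inter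
              (hJm k)).nullMeasurableSet
      _ ≤ μI {x | l < g x} := by
          apply measure_mono
          apply iUnion₂_subset
          intro k _
          exact inter_subset_left
  -- final chain
  have hfinal : X.N E ≤ X.N g := by
    calc X.N E ≤ X.N G := X.mono E G hEmeas hGmeas (Filter.Eventually.of_forall hEG)
      _ ≤ Filter.liminf (fun nn : ℕ => X.N (A (nn + 1))) Filter.atTop :=
          N_liminf_le X (fun nn => A (nn + 1)) (fun nn => hAmeas (nn + 1))
      _ ≤ X.N (Vf 0) := by
          calc Filter.liminf (fun nn : ℕ => X.N (A (nn + 1))) Filter.atTop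
              ≤ Filter.liminf (fun _ : ℕ => X.N (Vf 0)) Filter.atTop :=
                Filter.liminf_le_liminf
                  (Filter.Eventually.of_forall (fun nn => hAnorm (nn + 1) (by omega)))
            _ = X.N (Vf 0) := Filter.liminf_const _
      _ ≤ X.N g := hV0g
  have hae := sum_indicator_ae J e h1 h2 (fun k _ => c k)
  calc X.N (fun x => ∑ k, (J k).indicator (fun _ => c k) x)
      = X.N E := by
        apply N_congr_ae X _ hEmeas hae
        exact Finset.measurable_sum _ (fun k _ => measurable_const.indicator (hJm k))
    _ ≤ X.N g := hfinal

lemma iSup_min_natCast (a : ℝ≥0∞) : ⨆ m : ℕ, min a (m : ℝ≥0∞) = a := by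
  apply le_antisymm
  · exact iSup_le (fun m => min_le_left _ _)
  · rcases eq_or_ne a ⊤ with ha | ha
    · have : ∀ m : ℕ, min a (m : ℝ≥0∞) = (m : ℝ≥0∞) := fun m => min_eq_right (ha ▸ le_top)
      calc a ≤ ⨆ m : ℕ, (m : ℝ≥0∞) := le_of_eq (ha.trans ENNReal.iSup_natCast.symm)
        _ = ⨆ m : ℕ, min a (m : ℝ≥0∞) := by
            apply iSup_congr
            intro m
            exact (this m).symm
    · obtain ⟨mm, hmm⟩ := ENNReal.exists_nat_gt ha
      exact le_iSup_of_le mm (le_min le_rfl hmm.le)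

/-- Lemma B: the averaging operator over nonoverlapping intervals of equal length is a
contraction on any r.i. norm. -/
lemma lemB {δ : ℝ} (hδ : 0 < δ) {N : ℕ} (J : Fin N → Set ℝ) (e : Fin N → ℝ)
    (h1 : ∀ k, Ioo (e k) (e k + δ) ⊆ J k) (h2 : ∀ k, J k ⊆ Icc (e k) (e k + δ))
    (hpos : ∀ k, J k ⊆ Ioi 0)
    (hdisj : ∀ k k', k ≠ k' → Ioo (e k) (e k + δ) ∩ Ioo (e k') (e k' + δ) = ∅)
    (X : RINorm μI) (g : ℝ → ℝ≥0∞) (hg : Measurable g) :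
    X.N (fun x => ∑ k, (J k).indicator
      (fun _ => (ENNReal.ofReal δ)⁻¹ * ∫⁻ s in J k, g s) x) ≤ X.N g := by
  have hJm : ∀ k, MeasurableSet (J k) := fun k => J_measurable (h1 k) (h2 k)
  set F : ℕ → ℝ → ℝ≥0∞ := fun m x => ∑ k, (J k).indicator
      (fun _ => (ENNReal.ofReal δ)⁻¹ * ∫⁻ s in J k, min (g s) (m : ℝ≥0∞)) x with hF
  have hFmeas : ∀ m, Measurable (F m) :=
    fun m => Finset.measurable_sum _ (fun k _ => measurable_const.indicator (hJm k))
  have hTmeas : Measurable (fun x => ∑ k, (J k).indicator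
      (fun _ => (ENNReal.ofReal δ)⁻¹ * ∫⁻ s in J k, g s) x) :=
    Finset.measurable_sum _ (fun k _ => measurable_const.indicator (hJm k))
  have hintmono : ∀ k : Fin N, Monotone (fun m : ℕ => ∫⁻ s in J k, min (g s) (m : ℝ≥0∞)) := by
    intro k m m' hm
    apply lintegral_mono
    intro s
    exact min_le_min le_rfl (by exact_mod_cast hm)
  have hFmono : ∀ x, Monotone (fun m => F m x) := by
    intro x m m' hm
    apply Finset.sum_le_sum
    intro k _
    apply Set.indicator_le_indicator
    exact mul_le_mul_right (hintmono k hm) _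
  have hintsup : ∀ k : Fin N, (⨆ m : ℕ, ∫⁻ s in J k, min (g s) (m : ℝ≥0∞))
      = ∫⁻ s in J k, g s := by
    intro k
    rw [← lintegral_iSup (fun m => hg.min measurable_const)]
    · apply lintegral_congr
      intro s
      exact iSup_min_natCast (g s)
    · intro m m' hm s
      exact min_le_min le_rfl (by exact_mod_cast hm)
  have hFsup : ∀ x, (⨆ m, F m x) = ∑ k, (J k).indicator
      (fun _ => (ENNReal.ofReal δ)⁻¹ * ∫⁻ s in J k, g s) x := by
    intro x
    rw [hF]
    simp only
    have hswap := ENNReal.finsetSum_iSup_of_monotone (s := (Finset.univ : Finset (Fin N)))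
      (f := fun (k : Fin N) (m : ℕ) => (J k).indicator
        (fun _ => (ENNReal.ofReal δ)⁻¹ * ∫⁻ s in J k, min (g s) (m : ℝ≥0∞)) x)
      (by
        intro k m m' hm
        apply Set.indicator_le_indicator
        exact mul_le_mul_right (hintmono k hm) _)
    rw [← hswap]
    apply Finset.sum_congr rfl
    intro k _
    by_cases hx : x ∈ J k
    · simp only [Set.indicator_of_mem hx]
      rw [← ENNReal.mul_iSup, hintsup k]
    · simp only [Set.indicator_of_notMem hx]
      exact iSup_const
  have hfatou := X.fatou F _ hFmeas hTmeas (Filter.Eventually.of_forall hFmono)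
    (Filter.Eventually.of_forall hFsup)
  rw [← hfatou]
  apply iSup_le
  intro m
  calc X.N (F m) ≤ X.N (fun s => min (g s) (m : ℝ≥0∞)) :=
        lemB_bdd hδ J e h1 h2 hpos hdisj X _ (hg.min measurable_const) m
          (fun x => min_le_right _ _)
    _ ≤ X.N g := X.mono _ _ (hg.min measurable_const) hg
        (Filter.Eventually.of_forall (fun x => min_le_left _ _))

lemma μI_ae_Ioi : ∀ᵐ x ∂μI, x ∈ Ioi (0:ℝ) := by
  unfold μI
  exact ae_restrict_mem measurableSet_Ioi

lemma μI_ae_ne (a : ℝ) : ∀ᵐ x ∂μI, x ≠ a := by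
  have h := measure_eq_zero_iff_ae_notMem.1 (μI_null (measure_singleton a))
  filter_upwards [h] with x hx
  simpa using hx

/-- Main per-family estimate. -/
lemma mainLem {δ : ℝ} (hδ : 0 < δ) {N : ℕ} (J : Fin N → Set ℝ) (e : Fin N → ℝ)
    (h1 : ∀ k, Ioo (e k) (e k + δ) ⊆ J k) (h2 : ∀ k, J k ⊆ Icc (e k) (e k + δ))
    (hpos : ∀ k, J k ⊆ Ioi 0)
    (hdisj : ∀ k k', k ≠ k' → Ioo (e k) (e k + δ) ∩ Ioo (e k') (e k' + δ) = ∅)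
    (X Y : RINorm μI) (g : ℝ → ℝ≥0∞) (hg : Measurable g)
    (hg0 : X.N g ≠ 0) (hgt : X.N g ≠ ⊤) :
    Y.N (fun x => ∑ k, (J k).indicator
      (fun _ => (ENNReal.ofReal δ)⁻¹ * ∫⁻ s in J k, g s) x)
      ≤ fund Y δ / fund X δ * X.N g +
        (⨆ (f : ℝ → ℝ≥0∞) (_ : Measurable f) (_ : X.N f ≤ 1),
          Y.N ((Set.Ioi δ).indicator fun t => rearr μI f t)) * X.N g := by
  have he : ∀ k, 0 ≤ e k := fun k => e_nonneg hδ (h1 k) (hpos k)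
  have hJm : ∀ k, MeasurableSet (J k) := fun k => J_measurable (h1 k) (h2 k)
  have hδ0 : ENNReal.ofReal δ ≠ 0 := (ENNReal.ofReal_pos.2 hδ).ne'
  set c : Fin N → ℝ≥0∞ := fun k => (ENNReal.ofReal δ)⁻¹ * ∫⁻ s in J k, g s with hc
  have hμJ : ∀ k, μI (J k) = ENNReal.ofReal δ := by
    intro k
    rw [μI_apply_subset (hpos k)]
    exact volume_J (h1 k) (h2 k)
  have hint : ∀ k, (∫⁻ s in J k, g s) = ∫⁻ s in J k, g s ∂μI := by
    intro k
    unfold μI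
    rw [Measure.restrict_restrict (hJm k), inter_eq_self_of_subset_left (hpos k)]
  have hc_fin : ∀ k, c k ≠ ⊤ := by
    intro k
    obtain ⟨C, hC, hCle⟩ := X.exists_integral_le (J k) (hJm k)
      (by rw [hμJ k]; exact ENNReal.ofReal_lt_top)
    have hfin : (∫⁻ s in J k, g s) < ⊤ := by
      rw [hint k]
      calc (∫⁻ s in J k, g s ∂μI) ≤ C * X.N g := hCle g hg
        _ < ⊤ := ENNReal.mul_lt_top hC (lt_top_iff_ne_top.2 hgt)
    rw [hc]
    exact ENNReal.mul_ne_top (ENNReal.inv_ne_top.2 hδ0) hfin.ne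
  set R : ℝ → ℝ≥0∞ := fun x => ∑ k, (J k).indicator (fun _ => c k) x with hR
  set R' : ℝ → ℝ≥0∞ := fun x => ∑ k, (Ioo (e k) (e k + δ)).indicator (fun _ => c k) x with hR'
  have hRmeas : Measurable R :=
    Finset.measurable_sum _ (fun k _ => measurable_const.indicator (hJm k))
  have hR'meas : Measurable R' :=
    Finset.measurable_sum _ (fun k _ => measurable_const.indicator measurableSet_Ioo)
  have hRae : R =ᵐ[μI] R' := sum_indicator_ae J e h1 h2 (fun k _ => c k)
  have hYRR' : Y.N R = Y.N R' := N_congr_ae Y hRmeas hR'meas hRae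
  set rf : ℝ → ℝ≥0∞ := fun t => rearr μI R' t with hrf
  have hrfmeas : Measurable rf := rearr_measurable R'
  have hYrf : Y.N R' = Y.N rf :=
    Y.rearr_invariant R' rf hR'meas hrfmeas (fun l => (rearr_dist R' l).symm)
  have hsplit : rf = fun t => (Iic δ).indicator rf t + (Ioi δ).indicator rf t := by
    funext t
    by_cases ht : t ≤ δ
    · rw [Set.indicator_of_mem (by exact ht), Set.indicator_of_notMem (by simpa using ht),
        add_zero]
    · rw [Set.indicator_of_notMem (by exact ht),
        Set.indicator_of_mem (by exact not_le.1 ht), zero_add]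
  have hYsplit : Y.N rf ≤ Y.N ((Iic δ).indicator rf) + Y.N ((Ioi δ).indicator rf) := by
    calc Y.N rf = Y.N (fun t => (Iic δ).indicator rf t + (Ioi δ).indicator rf t) := by
          rw [← hsplit]
      _ ≤ _ := Y.add_le _ _ (hrfmeas.indicator measurableSet_Iic)
          (hrfmeas.indicator measurableSet_Ioi)
  set cmax : ℝ≥0∞ := Finset.univ.sup c with hcmax
  have hcmax_t : cmax ≠ ⊤ := by
    rw [hcmax, ← lt_top_iff_ne_top, Finset.sup_lt_iff (by exact ENNReal.zero_lt_top)]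
    exact fun k _ => lt_top_iff_ne_top.2 (hc_fin k)
  have hR'dist : ∀ l, μI {x | l < R' x} = ∑ k, (if l < c k then ENNReal.ofReal δ else 0) :=
    dist_sum_const e he hdisj c
  have hrf_le : ∀ t, rf t ≤ cmax := by
    intro t
    apply rearr_le_of_dist_le
    rw [hR'dist cmax]
    have : ∀ k : Fin N, (if cmax < c k then ENNReal.ofReal δ else 0) = 0 := by
      intro k
      rw [if_neg]
      exact not_lt.2 (Finset.le_sup (Finset.mem_univ k))
    rw [Finset.sum_congr rfl (fun k _ => this k), Finset.sum_const, smul_zero]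
    exact zero_le
  -- the single-interval bound
  have hA1 : ∀ k, c k * fund X δ ≤ X.N g := by
    intro k
    have hlemBk := lemB hδ (fun _ : Fin 1 => J k) (fun _ => e k)
      (fun _ => h1 k) (fun _ => h2 k) (fun _ => hpos k)
      (fun a b hab => absurd (Subsingleton.elim a b) hab) X g hg
    have hone : (fun x => ∑ i : Fin 1, (J k).indicator
        (fun _ => (ENNReal.ofReal δ)⁻¹ * ∫⁻ s in J k, g s) x)
        = fun x => (J k).indicator (fun _ => c k) x := by
      funext x
      rw [Fin.sum_univ_one, hc]
    rw [hone] at hlemBk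
    -- identify the norm of the indicator
    have hd1 : ∀ l, μI {x | l < (J k).indicator (fun _ => c k) x}
        = if l < c k then ENNReal.ofReal δ else 0 := by
      intro l
      by_cases hl : l < c k
      · have : {x | l < (J k).indicator (fun _ => c k) x} = J k := by
          ext x
          by_cases hx : x ∈ J k
          · simp [Set.indicator_of_mem hx, hx, hl]
          · simp [Set.indicator_of_notMem hx, hx]
        rw [this, if_pos hl, hμJ k]
      · have : {x | l < (J k).indicator (fun _ => c k) x} = ∅ := by
          ext x
          by_cases hx : x ∈ J k
          · simp [Set.indicator_of_mem hx, hl]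
          · simp [Set.indicator_of_notMem hx]
        rw [this, if_neg hl, measure_empty]
    have hd2 : ∀ l, μI {x | l < (Ioo (0:ℝ) δ).indicator (fun _ => c k) x}
        = if l < c k then ENNReal.ofReal δ else 0 := by
      intro l
      by_cases hl : l < c k
      · have : {x | l < (Ioo (0:ℝ) δ).indicator (fun _ => c k) x} = Ioo 0 δ := by
          ext x
          by_cases hx : x ∈ Ioo (0:ℝ) δ
          · simp [Set.indicator_of_mem hx, hx, hl]
          · simp [Set.indicator_of_notMem hx, hx]
        rw [this, if_pos hl, μI_Ioo 0 δ le_rfl, sub_zero]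
      · have : {x | l < (Ioo (0:ℝ) δ).indicator (fun _ => c k) x} = ∅ := by
          ext x
          by_cases hx : x ∈ Ioo (0:ℝ) δ
          · simp [Set.indicator_of_mem hx, hl]
          · simp [Set.indicator_of_notMem hx]
        rw [this, if_neg hl, measure_empty]
    have hswap : X.N (fun x => (J k).indicator (fun _ => c k) x)
        = X.N (fun x => (Ioo (0:ℝ) δ).indicator (fun _ => c k) x) := by
      apply X.rearr_invariant _ _ (measurable_const.indicator (hJm k))
        (measurable_const.indicator measurableSet_Ioo)
      intro l
      rw [hd1 l, hd2 l]
    have hsmul : (fun x => (Ioo (0:ℝ) δ).indicator (fun _ => c k) x)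
        = fun x => ((c k).toNNReal : ℝ≥0∞) * (Ioo (0:ℝ) δ).indicator (fun _ => (1:ℝ≥0∞)) x := by
      funext x
      by_cases hx : x ∈ Ioo (0:ℝ) δ
      · rw [Set.indicator_of_mem hx, Set.indicator_of_mem hx, mul_one,
          ENNReal.coe_toNNReal (hc_fin k)]
      · rw [Set.indicator_of_notMem hx, Set.indicator_of_notMem hx, mul_zero]
    calc c k * fund X δ
        = ((c k).toNNReal : ℝ≥0∞) * fund X δ := by rw [ENNReal.coe_toNNReal (hc_fin k)]
      _ = X.N (fun x => ((c k).toNNReal : ℝ≥0∞)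
            * (Ioo (0:ℝ) δ).indicator (fun _ => (1:ℝ≥0∞)) x) := by
          rw [X.smul_eq _ _ (measurable_const.indicator measurableSet_Ioo)]
          rfl
      _ = X.N (fun x => (J k).indicator (fun _ => c k) x) := by rw [hswap, hsmul]
      _ ≤ X.N g := hlemBk
  have hcmax_le : cmax ≤ X.N g / fund X δ := by
    rw [hcmax]
    apply Finset.sup_le
    intro k _
    rw [ENNReal.le_div_iff_mul_le (Or.inl (fund_ne_zero X hδ)) (Or.inl (fund_ne_top X δ))]
    exact hA1 k
  -- Term 1
  have hterm1 : Y.N ((Iic δ).indicator rf) ≤ fund Y δ / fund X δ * X.N g := by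
    have hmono : ∀ᵐ x ∂μI, (Iic δ).indicator rf x
        ≤ (cmax.toNNReal : ℝ≥0∞) * (Ioo (0:ℝ) δ).indicator (fun _ => (1:ℝ≥0∞)) x := by
      filter_upwards [μI_ae_Ioi, μI_ae_ne δ] with x hx1 hx2
      by_cases hxδ : x ≤ δ
      · have hxIoo : x ∈ Ioo (0:ℝ) δ := ⟨hx1, lt_of_le_of_ne hxδ hx2⟩
        rw [Set.indicator_of_mem (by exact hxδ), Set.indicator_of_mem hxIoo, mul_one,
          ENNReal.coe_toNNReal hcmax_t]
        exact hrf_le x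
      · rw [Set.indicator_of_notMem (by exact hxδ)]
        exact zero_le
    calc Y.N ((Iic δ).indicator rf)
        ≤ Y.N (fun x => (cmax.toNNReal : ℝ≥0∞)
            * (Ioo (0:ℝ) δ).indicator (fun _ => (1:ℝ≥0∞)) x) :=
          Y.mono _ _ (hrfmeas.indicator measurableSet_Iic)
            (measurable_const.mul (measurable_const.indicator measurableSet_Ioo)) hmono
      _ = (cmax.toNNReal : ℝ≥0∞) * fund Y δ := by
          rw [Y.smul_eq _ _ (measurable_const.indicator measurableSet_Ioo)]
          rfl
      _ = cmax * fund Y δ := by rw [ENNReal.coe_toNNReal hcmax_t]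
      _ ≤ X.N g / fund X δ * fund Y δ := mul_le_mul_left hcmax_le _
      _ = fund Y δ / fund X δ * X.N g := by
          rw [ENNReal.div_eq_inv_mul, ENNReal.div_eq_inv_mul]
          ring
  -- Term 2
  set S : ℝ≥0∞ := ⨆ (f : ℝ → ℝ≥0∞) (_ : Measurable f) (_ : X.N f ≤ 1),
      Y.N ((Set.Ioi δ).indicator fun t => rearr μI f t) with hS
  have hterm2 : Y.N ((Ioi δ).indicator rf) ≤ S * X.N g := by
    set n₀ : ℝ≥0 := (X.N g).toNNReal with hn₀
    have hn₀0 : n₀ ≠ 0 := by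
      rw [hn₀]
      simp only [ne_eq, ENNReal.toNNReal_eq_zero_iff]
      push_neg
      exact ⟨hg0, hgt⟩
    have hcoe : ((n₀ : ℝ≥0∞)) = X.N g := ENNReal.coe_toNNReal hgt
    set f₀ : ℝ → ℝ≥0∞ := fun x => ((n₀ : ℝ≥0∞))⁻¹ * R' x with hf₀
    have hf₀meas : Measurable f₀ := measurable_const.mul hR'meas
    have hRlemB : X.N R ≤ X.N g := by
      rw [hR]
      exact lemB hδ J e h1 h2 hpos hdisj X g hg
    have hR'le : X.N R' ≤ X.N g := by
      rw [← N_congr_ae X hRmeas hR'meas hRae]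
      exact hRlemB
    have hf₀le : X.N f₀ ≤ 1 := by
      have hcoe2 : (((n₀⁻¹ : ℝ≥0)) : ℝ≥0∞) = ((n₀ : ℝ≥0∞))⁻¹ := ENNReal.coe_inv hn₀0
      have : X.N f₀ = ((n₀ : ℝ≥0∞))⁻¹ * X.N R' := by
        rw [hf₀]
        rw [show (fun x => ((n₀ : ℝ≥0∞))⁻¹ * R' x)
          = fun x => (((n₀⁻¹ : ℝ≥0)) : ℝ≥0∞) * R' x by funext x; rw [hcoe2]]
        rw [X.smul_eq _ _ hR'meas, hcoe2]
      rw [this]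
      calc ((n₀ : ℝ≥0∞))⁻¹ * X.N R' ≤ ((n₀ : ℝ≥0∞))⁻¹ * X.N g :=
            mul_le_mul_right hR'le _
        _ = 1 := by rw [hcoe]; exact ENNReal.inv_mul_cancel hg0 hgt
    have hrf₀ : ∀ t, rearr μI f₀ t = ((n₀ : ℝ≥0∞))⁻¹ * rf t := by
      intro t
      rw [hf₀, hrf]
      exact rearr_smul R' ((n₀ : ℝ≥0∞))⁻¹
        (ENNReal.inv_ne_zero.2 ENNReal.coe_ne_top)
        (ENNReal.inv_ne_top.2 (by exact_mod_cast hn₀0)) t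
    have hindrw : ((Set.Ioi δ).indicator fun t => rearr μI f₀ t)
        = fun t => (((n₀⁻¹ : ℝ≥0)) : ℝ≥0∞) * (Ioi δ).indicator rf t := by
      funext t
      by_cases ht : t ∈ Ioi δ
      · rw [Set.indicator_of_mem ht, Set.indicator_of_mem ht, hrf₀ t, ENNReal.coe_inv hn₀0]
      · rw [Set.indicator_of_notMem ht, Set.indicator_of_notMem ht, mul_zero]
    have hYf₀ : Y.N ((Set.Ioi δ).indicator fun t => rearr μI f₀ t)
        = ((n₀ : ℝ≥0∞))⁻¹ * Y.N ((Ioi δ).indicator rf) := by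
      rw [hindrw, Y.smul_eq _ _ (hrfmeas.indicator measurableSet_Ioi), ENNReal.coe_inv hn₀0]
    have hin_S : Y.N ((Set.Ioi δ).indicator fun t => rearr μI f₀ t) ≤ S := by
      rw [hS]
      calc Y.N ((Set.Ioi δ).indicator fun t => rearr μI f₀ t)
          ≤ ⨆ (_ : X.N f₀ ≤ 1), Y.N ((Set.Ioi δ).indicator fun t => rearr μI f₀ t) :=
            le_iSup (fun _ => Y.N ((Set.Ioi δ).indicator fun t => rearr μI f₀ t)) hf₀le
        _ ≤ ⨆ (_ : Measurable f₀) (_ : X.N f₀ ≤ 1),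
              Y.N ((Set.Ioi δ).indicator fun t => rearr μI f₀ t) :=
            le_iSup (fun _ => ⨆ (_ : X.N f₀ ≤ 1),
              Y.N ((Set.Ioi δ).indicator fun t => rearr μI f₀ t)) hf₀meas
        _ ≤ _ := le_iSup (fun f => ⨆ (_ : Measurable f) (_ : X.N f ≤ 1),
              Y.N ((Set.Ioi δ).indicator fun t => rearr μI f t)) f₀
    calc Y.N ((Ioi δ).indicator rf)
        = (n₀ : ℝ≥0∞) * (((n₀ : ℝ≥0∞))⁻¹ * Y.N ((Ioi δ).indicator rf)) := by
          rw [← mul_assoc, ENNReal.mul_inv_cancel (by exact_mod_cast hn₀0)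
            ENNReal.coe_ne_top, one_mul]
      _ = (n₀ : ℝ≥0∞) * Y.N ((Set.Ioi δ).indicator fun t => rearr μI f₀ t) := by
          rw [hYf₀]
      _ ≤ (n₀ : ℝ≥0∞) * S := mul_le_mul_right hin_S _
      _ = S * X.N g := by rw [hcoe, mul_comm]
  calc Y.N (fun x => ∑ k, (J k).indicator
        (fun _ => (ENNReal.ofReal δ)⁻¹ * ∫⁻ s in J k, g s) x)
      = Y.N rf := by rw [← hYrf, ← hYRR', hR]
    _ ≤ Y.N ((Iic δ).indicator rf) + Y.N ((Ioi δ).indicator rf) := hYsplit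
    _ ≤ fund Y δ / fund X δ * X.N g + S * X.N g := add_le_add hterm1 hterm2
    _ = _ := by rw [hS]

end Avg

open Avg in
/-- the averaging estimate (Proposition on averaging in r.i. spaces). -/
theorem averaging_estimate (M : ℕ) (δ : ℝ) (hδ : 0 < δ) (I : Fin (M + 1) → Set ℝ)
    (hIval : ∀ j, ∃ e : ℝ, Set.Ioo e (e + δ) ⊆ I j ∧ I j ⊆ Set.Icc e (e + δ))
    (hIpos : ∀ j, I j ⊆ Set.Ioi 0)
    (hIdisj : ∀ j k, j ≠ k → interior (I j) ∩ interior (I k) = ∅)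
    (X Y : RINorm μI) (g : ℝ → ℝ≥0∞) (hg : Measurable g) :
    Y.N (fun t => ∑ j : Fin M,
        (I j.castSucc).indicator
          (fun _ => (ENNReal.ofReal δ)⁻¹ * ∫⁻ s in I j.castSucc ∪ I j.succ, g s) t)
      ≤ 2 * (fund Y δ / fund X δ +
            ⨆ (f : ℝ → ℝ≥0∞) (_ : Measurable f) (_ : X.N f ≤ 1),
              Y.N ((Set.Ioi δ).indicator fun t => rearr μI f t)) * X.N g := by
  classical
  choose e he1 he2 using hIval
  have hJm : ∀ j, MeasurableSet (I j) := fun j => J_measurable (he1 j) (he2 j)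
  have hIooD : ∀ j k, j ≠ k → Ioo (e j) (e j + δ) ∩ Ioo (e k) (e k + δ) = ∅ := by
    intro j k hjk
    apply eq_empty_of_subset_empty
    calc Ioo (e j) (e j + δ) ∩ Ioo (e k) (e k + δ)
        ⊆ interior (I j) ∩ interior (I k) :=
          inter_subset_inter (interior_maximal (he1 j) isOpen_Ioo)
            (interior_maximal (he1 k) isOpen_Ioo)
      _ = ∅ := hIdisj j k hjk
  set S : ℝ≥0∞ := ⨆ (f : ℝ → ℝ≥0∞) (_ : Measurable f) (_ : X.N f ≤ 1),
      Y.N ((Set.Ioi δ).indicator fun t => rearr μI f t) with hS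
  by_cases hg0 : X.N g = 0
  · -- degenerate case : g = 0 a.e.
    have hgz : g =ᵐ[μI] 0 := (X.eq_zero_iff g hg).1 hg0
    have hzero : ∀ j : Fin M, (∫⁻ s in I j.castSucc ∪ I j.succ, g s) = 0 := by
      intro j
      have hsub : I j.castSucc ∪ I j.succ ⊆ Ioi 0 :=
        union_subset (hIpos _) (hIpos _)
      have hm : MeasurableSet (I j.castSucc ∪ I j.succ) := (hJm _).union (hJm _)
      have hres : volume.restrict (I j.castSucc ∪ I j.succ)
          = μI.restrict (I j.castSucc ∪ I j.succ) := by
        unfold μI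
        rw [Measure.restrict_restrict hm, inter_eq_self_of_subset_left hsub]
      have hgz' : g =ᵐ[μI.restrict (I j.castSucc ∪ I j.succ)] 0 := ae_restrict_of_ae hgz
      calc (∫⁻ s in I j.castSucc ∪ I j.succ, g s)
          = ∫⁻ s in I j.castSucc ∪ I j.succ, g s ∂μI := by rw [← hres]
        _ = ∫⁻ s in I j.castSucc ∪ I j.succ, (0:ℝ≥0∞) ∂μI := lintegral_congr_ae hgz'
        _ = 0 := lintegral_zero
    have hfun : (fun t => ∑ j : Fin M, (I j.castSucc).indicator
        (fun _ => (ENNReal.ofReal δ)⁻¹ * ∫⁻ s in I j.castSucc ∪ I j.succ, g s) t)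
        = fun _ => (0:ℝ≥0∞) := by
      funext t
      apply Finset.sum_eq_zero
      intro j _
      simp [hzero j]
    rw [hfun, N_zero Y]
    exact zero_le
  by_cases hgt : X.N g = ⊤
  · -- degenerate case : the right-hand side is infinite
    have hb0 : fund Y δ / fund X δ ≠ 0 := by
      rw [ENNReal.div_eq_inv_mul]
      apply mul_ne_zero
      · exact ENNReal.inv_ne_zero.2 (fund_ne_top X δ)
      · exact fund_ne_zero Y hδ
    have hfac : 2 * (fund Y δ / fund X δ + S) ≠ 0 := by
      apply mul_ne_zero
      · exact two_ne_zero
      · intro hc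
        rw [add_eq_zero] at hc
        exact hb0 hc.1
    rw [hgt, ENNReal.mul_top hfac]
    exact le_top
  -- main case
  set p : Fin M → ℝ≥0∞ := fun j => (ENNReal.ofReal δ)⁻¹ * ∫⁻ s in I j.castSucc, g s with hp
  set qq : Fin M → ℝ≥0∞ := fun j => (ENNReal.ofReal δ)⁻¹ * ∫⁻ s in I j.succ, g s with hqq
  set P : ℝ → ℝ≥0∞ := fun x => ∑ j : Fin M, (I j.castSucc).indicator (fun _ => p j) x with hP
  set Q : ℝ → ℝ≥0∞ := fun x => ∑ j : Fin M, (I j.castSucc).indicator (fun _ => qq j) x with hQ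
  set Q' : ℝ → ℝ≥0∞ := fun x => ∑ j : Fin M, (I j.succ).indicator (fun _ => qq j) x with hQ'
  have hPmeas : Measurable P :=
    Finset.measurable_sum _ (fun j _ => measurable_const.indicator (hJm _))
  have hQmeas : Measurable Q :=
    Finset.measurable_sum _ (fun j _ => measurable_const.indicator (hJm _))
  have hQ'meas : Measurable Q' :=
    Finset.measurable_sum _ (fun j _ => measurable_const.indicator (hJm _))
  have hhmeas : Measurable (fun t => ∑ j : Fin M, (I j.castSucc).indicator
      (fun _ => (ENNReal.ofReal δ)⁻¹ * ∫⁻ s in I j.castSucc ∪ I j.succ, g s) t) :=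
    Finset.measurable_sum _ (fun j _ => measurable_const.indicator (hJm _))
  -- pointwise bound h ≤ P + Q
  have hptw : ∀ t, (∑ j : Fin M, (I j.castSucc).indicator
      (fun _ => (ENNReal.ofReal δ)⁻¹ * ∫⁻ s in I j.castSucc ∪ I j.succ, g s) t)
      ≤ P t + Q t := by
    intro t
    rw [hP, hQ]
    simp only
    rw [← Finset.sum_add_distrib]
    apply Finset.sum_le_sum
    intro j _
    by_cases ht : t ∈ I j.castSucc
    · rw [Set.indicator_of_mem ht, Set.indicator_of_mem ht, Set.indicator_of_mem ht, hp, hqq]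
      simp only
      rw [← mul_add]
      apply mul_le_mul_right
      exact lintegral_union_le _ _ _
    · rw [Set.indicator_of_notMem ht, Set.indicator_of_notMem ht,
        Set.indicator_of_notMem ht, add_zero]
  -- distributions of Q and Q' agree
  have hQdist : ∀ l, μI {x | l < Q x} = ∑ j : Fin M,
      (if l < qq j then ENNReal.ofReal δ else 0) := by
    intro l
    have hae := sum_indicator_ae (fun j : Fin M => I j.castSucc) (fun j => e j.castSucc)
      (fun j => he1 _) (fun j => he2 _) (fun j _ => qq j)
    have hsets : {x | l < Q x} =ᵐ[μI] {x | l < (fun x => ∑ j : Fin M,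
        (Ioo (e j.castSucc) (e j.castSucc + δ)).indicator (fun _ => qq j) x) x} := by
      filter_upwards [hae] with x hx
      exact congrArg (fun z => (l < z : Prop)) hx
    rw [measure_congr hsets]
    exact dist_sum_const (fun j => e j.castSucc)
      (fun j => e_nonneg hδ (he1 _) (hIpos _))
      (fun j k hjk => hIooD _ _ (fun hc => hjk (Fin.castSucc_injective M hc))) qq l
  have hQ'dist : ∀ l, μI {x | l < Q' x} = ∑ j : Fin M,
      (if l < qq j then ENNReal.ofReal δ else 0) := by
    intro l
    have hae := sum_indicator_ae (fun j : Fin M => I j.succ) (fun j => e j.succ)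
      (fun j => he1 _) (fun j => he2 _) (fun j _ => qq j)
    have hsets : {x | l < Q' x} =ᵐ[μI] {x | l < (fun x => ∑ j : Fin M,
        (Ioo (e j.succ) (e j.succ + δ)).indicator (fun _ => qq j) x) x} := by
      filter_upwards [hae] with x hx
      exact congrArg (fun z => (l < z : Prop)) hx
    rw [measure_congr hsets]
    exact dist_sum_const (fun j => e j.succ)
      (fun j => e_nonneg hδ (he1 _) (hIpos _))
      (fun j k hjk => hIooD _ _ (fun hc => hjk (Fin.succ_injective M hc))) qq l
  have hQQ' : Y.N Q = Y.N Q' := by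
    apply Y.rearr_invariant Q Q' hQmeas hQ'meas
    intro l
    rw [hQdist l, hQ'dist l]
  -- apply the main lemma to both families
  have hPbound : Y.N P ≤ fund Y δ / fund X δ * X.N g + S * X.N g := by
    rw [hP, hS]
    exact mainLem hδ (fun j : Fin M => I j.castSucc) (fun j => e j.castSucc)
      (fun j => he1 _) (fun j => he2 _) (fun j => hIpos _)
      (fun j k hjk => hIooD _ _ (fun hc => hjk (Fin.castSucc_injective M hc)))
      X Y g hg hg0 hgt
  have hQ'bound : Y.N Q' ≤ fund Y δ / fund X δ * X.N g + S * X.N g := by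
    rw [hQ', hS]
    exact mainLem hδ (fun j : Fin M => I j.succ) (fun j => e j.succ)
      (fun j => he1 _) (fun j => he2 _) (fun j => hIpos _)
      (fun j k hjk => hIooD _ _ (fun hc => hjk (Fin.succ_injective M hc)))
      X Y g hg hg0 hgt
  calc Y.N (fun t => ∑ j : Fin M, (I j.castSucc).indicator
        (fun _ => (ENNReal.ofReal δ)⁻¹ * ∫⁻ s in I j.castSucc ∪ I j.succ, g s) t)
      ≤ Y.N (fun t => P t + Q t) := by
        apply Y.mono _ _ hhmeas (hPmeas.add hQmeas)
        exact Filter.Eventually.of_forall hptw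
    _ ≤ Y.N P + Y.N Q := Y.add_le _ _ hPmeas hQmeas
    _ = Y.N P + Y.N Q' := by rw [hQQ']
    _ ≤ (fund Y δ / fund X δ * X.N g + S * X.N g)
        + (fund Y δ / fund X δ * X.N g + S * X.N g) := add_le_add hPbound hQ'bound
    _ = 2 * (fund Y δ / fund X δ + S) * X.N g := by ring

end
end

section
/- Let ‖·‖_X and ‖·‖_Z be rearrangement-invariant function norms over (0,∞), let w be a nonnegative measurable function on (0,∞), and define ‖g‖_Y := ‖g^*(t) w(t)‖_Z for measurable g on (0,∞). Then for every a > 0: sup_{‖f‖_X ≤ 1} ‖f^* χ_{(a,∞)}‖_Y ≤ ‖χ_{(0,a)} w‖_Z / φ_X(a) + sup_{‖f‖_X ≤ 1} ‖f^*(t) w(t) χ_{(a,∞)}(t)‖_Z, where the suprema are over measurable f on (0,∞) with ‖f‖_X ≤ 1. -/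
open MeasureTheory Set Filter Topology
open scoped ENNReal NNReal

noncomputable section

/-! ### Auxiliary lemmas -/

lemma rearr_antitone (f : ℝ → ℝ≥0∞) : Antitone (rearr μI f) := fun s t hst =>
  sInf_le_sInf fun _ hl => le_trans hl (ENNReal.ofReal_le_ofReal hst)

lemma rearr_measurable (f : ℝ → ℝ≥0∞) : Measurable (rearr μI f) :=
  (rearr_antitone f).measurable

lemma rearr_le_of_le {f : ℝ → ℝ≥0∞} {c : ℝ≥0∞} (h : ∀ x, f x ≤ c) (t : ℝ) :
    rearr μI f t ≤ c := by
  refine sInf_le ?_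
  have : {x | c < f x} = ∅ := by
    ext x; simp only [mem_setOf_eq, mem_empty_iff_false, iff_false, not_lt]; exact h x
  simp [this]

lemma rearr_mono {f g : ℝ → ℝ≥0∞} (h : ∀ x, f x ≤ g x) (t : ℝ) :
    rearr μI f t ≤ rearr μI g t :=
  sInf_le_sInf fun l hl =>
    le_trans (measure_mono fun x hx => lt_of_lt_of_le hx (h x)) hl

lemma μI_Ioo_s2 {b : ℝ} (hb : 0 ≤ b) : μI (Ioo 0 b) = ENNReal.ofReal b := by
  rw [μI, Measure.restrict_apply measurableSet_Ioo,
    inter_eq_left.mpr Ioo_subset_Ioi_self, Real.volume_Ioo, sub_zero]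

lemma rearr_rearr_le (f : ℝ → ℝ≥0∞) (t : ℝ) :
    rearr μI (rearr μI f) t ≤ rearr μI f t := by
  refine sInf_le ?_
  have hsub : {x | rearr μI f t < rearr μI f x} ⊆ Iio t := by
    intro x hx
    by_contra h
    simp only [mem_Iio, not_lt] at h
    exact absurd (rearr_antitone f h) (not_le.mpr hx)
  calc μI {x | rearr μI f t < rearr μI f x} ≤ μI (Iio t) := measure_mono hsub
    _ = ENNReal.ofReal t := by
        rw [μI, Measure.restrict_apply measurableSet_Iio, Set.Iio_inter_Ioi,
          Real.volume_Ioo, sub_zero]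

lemma dist_ind (A : Set ℝ) (l : ℝ≥0∞) :
    {x | l < A.indicator (fun _ => (1 : ℝ≥0∞)) x} = if l < 1 then A else ∅ := by
  ext x
  by_cases hx : x ∈ A <;> by_cases hl : l < 1 <;>
    simp [Set.indicator_apply, hx, hl, not_lt.mpr (zero_le : 0 ≤ l)]

lemma norm_ind_eq (X : RINorm μI) {A B : Set ℝ} (hA : MeasurableSet A)
    (hB : MeasurableSet B) (h : μI A = μI B) :
    X.N (A.indicator fun _ => 1) = X.N (B.indicator fun _ => 1) := by
  refine X.rearr_invariant _ _ (measurable_const.indicator hA)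
    (measurable_const.indicator hB) fun l => ?_
  rw [dist_ind, dist_ind]
  split_ifs
  · exact h
  · rfl

lemma fund_ne_zero (X : RINorm μI) {a : ℝ} (ha : 0 < a) : fund X a ≠ 0 := by
  rw [fund]
  intro h
  have h0 := (X.eq_zero_iff _ (measurable_const.indicator measurableSet_Ioo)).mp h
  have hsub : Ioo (0 : ℝ) a ⊆ {x | ¬ (Ioo (0 : ℝ) a).indicator (fun _ => (1 : ℝ≥0∞)) x
      = (0 : ℝ → ℝ≥0∞) x} := by
    intro x hx
    simp only [mem_setOf_eq, Pi.zero_apply, Set.indicator_of_mem hx]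
    exact one_ne_zero
  have hz : μI (Ioo (0 : ℝ) a) = 0 := measure_mono_null hsub (ae_iff.mp h0)
  rw [μI_Ioo_s2 ha.le] at hz
  exact absurd hz (ENNReal.ofReal_pos.mpr ha).ne'

lemma μI_Ioi_zero : μI (Ioi (0 : ℝ)) = ∞ := by
  rw [μI, Measure.restrict_apply measurableSet_Ioi, inter_self, Real.volume_Ioi]

lemma rearr_le_one_div_fund (X : RINorm μI) {f : ℝ → ℝ≥0∞} (hf : Measurable f)
    (hN : X.N f ≤ 1) {a : ℝ} (ha : 0 < a) : rearr μI f a ≤ 1 / fund X a := by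
  have hφ := fund_ne_zero X ha
  refine ENNReal.le_of_forall_nnreal_lt fun c hc => ?_
  rw [ENNReal.le_div_iff_mul_le (Or.inl hφ) (Or.inr ENNReal.one_ne_top)]
  have hcm : ENNReal.ofReal a < μI {x | (c : ℝ≥0∞) < f x} := by
    by_contra h
    push_neg at h
    exact absurd (sInf_le h : rearr μI f a ≤ c) (not_le.mpr hc)
  set A := {x | (c : ℝ≥0∞) < f x} with hA
  have hAm : MeasurableSet A := measurableSet_lt measurable_const hf
  have hfa : fund X a ≤ X.N (A.indicator fun _ => 1) := by
    rcases eq_or_ne (μI A) ∞ with hinf | hfin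
    · rw [norm_ind_eq X hAm measurableSet_Ioi (by rw [hinf, μI_Ioi_zero])]
      refine X.mono _ _ (measurable_const.indicator measurableSet_Ioo)
        (measurable_const.indicator measurableSet_Ioi) (ae_of_all _ fun x => ?_)
      exact Set.indicator_le_indicator_of_subset Ioo_subset_Ioi_self
        (fun _ => zero_le) x
    · have hlt : a < (μI A).toReal := by
        have := ENNReal.ofReal_lt_ofReal_iff_of_nonneg ha.le |>.mp
          (by rwa [ENNReal.ofReal_toReal hfin])
        exact this
      rw [norm_ind_eq X hAm measurableSet_Ioo
        (show μI A = μI (Ioo 0 (μI A).toReal) by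
          rw [μI_Ioo_s2 (le_of_lt (ha.trans hlt)), ENNReal.ofReal_toReal hfin])]
      refine X.mono _ _ (measurable_const.indicator measurableSet_Ioo)
        (measurable_const.indicator measurableSet_Ioo) (ae_of_all _ fun x => ?_)
      exact Set.indicator_le_indicator_of_subset
        (Ioo_subset_Ioo le_rfl hlt.le) (fun _ => zero_le) x
  calc (c : ℝ≥0∞) * fund X a ≤ c * X.N (A.indicator fun _ => 1) :=
        mul_le_mul_right hfa _
    _ = X.N (fun x => (c : ℝ≥0∞) * A.indicator (fun _ => 1) x) :=
        (X.smul_eq c _ (measurable_const.indicator hAm)).symm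
    _ ≤ X.N f := by
        refine X.mono _ _ ((measurable_const.indicator hAm).const_mul _) hf
          (ae_of_all _ fun x => ?_)
        by_cases hx : x ∈ A
        · simpa [Set.indicator_of_mem hx] using (le_of_lt hx)
        · simp [Set.indicator_of_notMem hx]
    _ ≤ 1 := hN

/-- cutting off a weighted norm `‖g‖_Y := ‖g^* w‖_Z`. -/
theorem cutting_weighted_norm (X Z : RINorm μI) (w : ℝ → ℝ≥0∞) (hw : Measurable w)
    (a : ℝ) (ha : 0 < a) :
    (⨆ (f : ℝ → ℝ≥0∞) (_ : Measurable f) (_ : X.N f ≤ 1),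
        Z.N (fun t => rearr μI ((Set.Ioi a).indicator fun s => rearr μI f s) t * w t))
      ≤ Z.N ((Set.Ioo (0 : ℝ) a).indicator w) / fund X a +
        ⨆ (f : ℝ → ℝ≥0∞) (_ : Measurable f) (_ : X.N f ≤ 1),
          Z.N ((Set.Ioi a).indicator fun t => rearr μI f t * w t) := by
  refine iSup_le fun f => iSup_le fun hf => iSup_le fun hN => ?_
  have hFm : Measurable (rearr μI f) := rearr_measurable f
  set g : ℝ → ℝ≥0∞ := (Ioi a).indicator fun s => rearr μI f s with hg
  have hgm : Measurable g := hFm.indicator measurableSet_Ioi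
  have hGm : Measurable (rearr μI g) := rearr_measurable g
  set β := rearr μI f a with hβdef
  have hβ : β ≤ 1 / fund X a := rearr_le_one_div_fund X hf hN ha
  have hβtop : β ≠ ∞ :=
    ne_top_of_le_ne_top (ENNReal.div_lt_top ENNReal.one_ne_top (fund_ne_zero X ha)).ne hβ
  have hgβ : ∀ s, g s ≤ β := by
    intro s
    by_cases hs : s ∈ Ioi a
    · simpa [hg, Set.indicator_of_mem hs] using rearr_antitone f (le_of_lt hs)
    · simp [hg, Set.indicator_of_notMem hs]
  have hGβ : ∀ t, rearr μI g t ≤ β := fun t => rearr_le_of_le hgβ t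
  have hGF : ∀ t, rearr μI g t ≤ rearr μI f t := fun t =>
    le_trans (rearr_mono (fun s => Set.indicator_le_self _ _ s) t) (rearr_rearr_le f t)
  set h1 : ℝ → ℝ≥0∞ := fun t => β * (Ioo (0 : ℝ) a).indicator w t with hh1
  set h2 : ℝ → ℝ≥0∞ := (Ioi a).indicator (fun t => rearr μI f t * w t) with hh2
  have h1m : Measurable h1 := (hw.indicator measurableSet_Ioo).const_mul β
  have h2m : Measurable h2 := (hFm.mul hw).indicator measurableSet_Ioi
  have hae : ∀ᵐ t ∂μI, rearr μI g t * w t ≤ h1 t + h2 t := by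
    have h0 : ∀ᵐ t ∂μI, t ∈ Ioi (0 : ℝ) := ae_restrict_mem measurableSet_Ioi
    have hne : ∀ᵐ t ∂μI, t ≠ a := by
      refine ae_iff.mpr ?_
      have : {t : ℝ | ¬ t ≠ a} = {a} := by ext t; simp
      rw [this, μI, Measure.restrict_apply (measurableSet_singleton a)]
      exact measure_mono_null inter_subset_left Real.volume_singleton
    filter_upwards [h0, hne] with t ht0 hta
    rcases lt_or_gt_of_ne hta with hlt | hgt
    · have h1eq : h1 t = β * w t := by
        have ht : t ∈ Ioo (0 : ℝ) a := ⟨ht0, hlt⟩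
        show β * (Ioo (0 : ℝ) a).indicator w t = β * w t
        rw [Set.indicator_of_mem ht w]
      calc rearr μI g t * w t ≤ β * w t := mul_le_mul_left (hGβ t) _
        _ ≤ h1 t + h2 t := by rw [h1eq]; exact le_self_add
    · have h2eq : h2 t = rearr μI f t * w t := Set.indicator_of_mem hgt _
      calc rearr μI g t * w t ≤ rearr μI f t * w t := mul_le_mul_left (hGF t) _
        _ ≤ h1 t + h2 t := by rw [h2eq]; exact le_add_self
  have step1 : Z.N (fun t => rearr μI g t * w t) ≤ Z.N (fun t => h1 t + h2 t) :=
    Z.mono _ _ (hGm.mul hw) (h1m.add h2m) hae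
  have step2 : Z.N (fun t => h1 t + h2 t) ≤ Z.N h1 + Z.N h2 := Z.add_le h1 h2 h1m h2m
  have step3 : Z.N h1 ≤ Z.N ((Ioo (0 : ℝ) a).indicator w) / fund X a := by
    have hco : (β.toNNReal : ℝ≥0∞) = β := ENNReal.coe_toNNReal hβtop
    have heq : Z.N h1 = β * Z.N ((Ioo (0 : ℝ) a).indicator w) := by
      calc Z.N h1 = Z.N (fun t => (β.toNNReal : ℝ≥0∞) * (Ioo (0 : ℝ) a).indicator w t) := by
            rw [hh1]; simp only [hco]
        _ = (β.toNNReal : ℝ≥0∞) * Z.N ((Ioo (0 : ℝ) a).indicator w) :=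
            Z.smul_eq _ _ (hw.indicator measurableSet_Ioo)
        _ = β * Z.N ((Ioo (0 : ℝ) a).indicator w) := by rw [hco]
    rw [heq]
    calc β * Z.N ((Ioo (0 : ℝ) a).indicator w)
        ≤ (1 / fund X a) * Z.N ((Ioo (0 : ℝ) a).indicator w) := mul_le_mul_left hβ _
      _ = Z.N ((Ioo (0 : ℝ) a).indicator w) / fund X a := by
          rw [one_div, ENNReal.div_eq_inv_mul]
  have step4 : Z.N h2 ≤ ⨆ (f : ℝ → ℝ≥0∞) (_ : Measurable f) (_ : X.N f ≤ 1),
      Z.N ((Set.Ioi a).indicator fun t => rearr μI f t * w t) :=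
    le_iSup_of_le f (le_iSup_of_le hf (le_iSup_of_le hN le_rfl))
  exact le_trans step1 (le_trans step2 (add_le_add step3 step4))

end
end

section
/- Let p, q, r, s ∈ [1,∞] and A = (α₀, α_∞), B = (β₀, β_∞) ∈ ℝ² be such that (p,q,A) and (r,s,B) are admissible Lorentz–Zygmund parameters. If p < r, then lim_{a→∞} sup{ ‖f^* χ_{(a,∞)}‖_{L^{r,s,B}(0,∞)} : f measurable on (0,∞), ‖f‖_{L^{p,q,A}(0,∞)} ≤ 1 } = 0. -/
open MeasureTheory Set Filter Topology
open scoped ENNReal NNReal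

noncomputable section

/-- `ℓ(t) = 1 + |log t|`. -/
def ell (t : ℝ) : ℝ := 1 + |Real.log t|

/-- The broken-logarithm power `ℓ^A(t)`, equal to `ℓ(t)^{α₀}` for `t ≤ 1` and to
`ℓ(t)^{α_∞}` for `t > 1`, where `A = (α₀, α_∞)`. -/
def ellA (A : ℝ × ℝ) (t : ℝ) : ℝ := if t ≤ 1 then ell t ^ A.1 else ell t ^ A.2

/-- The `L^q(0,∞)` norm (with `q ∈ [1,∞]`) of a nonnegative function. -/
def lqNorm (q : ℝ≥0∞) (g : ℝ → ℝ≥0∞) : ℝ≥0∞ :=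
  if q = ∞ then essSup g μI
  else (∫⁻ t in Set.Ioi (0 : ℝ), g t ^ q.toReal) ^ q.toReal⁻¹

/-- The Lorentz–Zygmund functional
`‖f‖_{L^{p,q,A}(0,∞)} = ‖ t^{1/p - 1/q} ℓ^A(t) f^*(t) ‖_{L^q(0,∞)}`
(with the conventions `1/∞ = 0`). -/
def lzNorm (p q : ℝ≥0∞) (A : ℝ × ℝ) (f : ℝ → ℝ≥0∞) : ℝ≥0∞ :=
  lqNorm q fun t => ENNReal.ofReal (t ^ (p.toReal⁻¹ - q.toReal⁻¹) * ellA A t) * rearr μI f t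

/-- Admissibility of Lorentz–Zygmund parameters: the functional `‖·‖_{L^{p,q,A}}` is
equivalent to a rearrangement-invariant norm. -/
def LZAdmissible (p q : ℝ≥0∞) (A : ℝ × ℝ) : Prop :=
  (p = 1 ∧ q = 1 ∧ 0 ≤ A.1 ∧ A.2 ≤ 0) ∨
  (1 < p ∧ p < ∞ ∧ 1 ≤ q) ∨
  (p = ∞ ∧ 1 ≤ q ∧ q < ∞ ∧ A.1 + q.toReal⁻¹ < 0) ∨
  (p = ∞ ∧ q = ∞ ∧ A.1 ≤ 0)


lemma one_le_ell (t : ℝ) : 1 ≤ ell t := by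
  simp [ell, abs_nonneg]

lemma ell_pos (t : ℝ) : 0 < ell t := lt_of_lt_of_le one_pos (one_le_ell t)

lemma ellA_pos (A : ℝ × ℝ) (t : ℝ) : 0 < ellA A t := by
  unfold ellA; split <;> exact Real.rpow_pos_of_pos (ell_pos t) _

lemma ell_eq {t : ℝ} (ht : 1 ≤ t) : ell t = 1 + Real.log t := by
  rw [ell, abs_of_nonneg (Real.log_nonneg ht)]

lemma ell_mono {u t : ℝ} (hu : 1 ≤ u) (hut : u ≤ t) : ell u ≤ ell t := by
  rw [ell_eq hu, ell_eq (hu.trans hut)]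
  have := Real.log_le_log (lt_of_lt_of_le one_pos hu) hut
  linarith

lemma ell_inv (t : ℝ) : ell t⁻¹ = ell t := by
  simp [ell, Real.log_inv, abs_neg]

/-- logarithm powers grow slower than any positive power -/
lemma log_pow_le (γ : ℝ) {ε : ℝ} (hε : 0 < ε) :
    ∃ c : ℝ, 0 < c ∧ ∀ t : ℝ, 1 ≤ t → ell t ^ γ ≤ c * t ^ ε := by
  rcases le_or_gt γ 0 with hγ | hγ
  · refine ⟨1, one_pos, fun t ht => ?_⟩
    have h1 : ell t ^ γ ≤ 1 := by
      calc ell t ^ γ ≤ ell t ^ (0:ℝ) :=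
        Real.rpow_le_rpow_of_exponent_le (one_le_ell t) hγ
      _ = 1 := Real.rpow_zero _
    have h2 : (1:ℝ) ≤ t ^ ε := Real.one_le_rpow ht hε.le
    nlinarith
  · set ε' : ℝ := min (ε / γ) 1 with hε'def
    have hε'pos : 0 < ε' := lt_min (by positivity) one_pos
    have hε'le1 : ε' ≤ 1 := min_le_right _ _
    refine ⟨(ε'⁻¹) ^ γ, by positivity, fun t ht => ?_⟩
    have htpos : (0:ℝ) < t := lt_of_lt_of_le one_pos ht
    have hlog : Real.log t ≤ (t ^ ε' - 1) / ε' := by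
      have h := Real.log_le_sub_one_of_pos (x := t ^ ε') (by positivity)
      rw [Real.log_rpow htpos] at h
      rw [le_div_iff₀ hε'pos]; linarith [mul_comm ε' (Real.log t)]
    have hell : ell t ≤ t ^ ε' / ε' := by
      rw [ell_eq ht]
      have h1 : (1:ℝ) ≤ t ^ ε' := Real.one_le_rpow ht hε'pos.le
      have h2 : (1 + Real.log t) * ε' ≤ t ^ ε' := by
        have := (le_div_iff₀ hε'pos).mp hlog
        nlinarith
      exact (le_div_iff₀ hε'pos).mpr h2
    calc ell t ^ γ ≤ (t ^ ε' / ε') ^ γ :=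
          Real.rpow_le_rpow (ell_pos t).le hell hγ.le
      _ = ε'⁻¹ ^ γ * t ^ (ε' * γ) := by
          rw [div_eq_mul_inv, Real.mul_rpow (by positivity) (by positivity), mul_comm,
            ← Real.rpow_mul htpos.le]
      _ ≤ ε'⁻¹ ^ γ * t ^ ε := by
          have hεle : ε' * γ ≤ ε := by
            have : ε' ≤ ε/γ := min_le_left _ _
            calc ε' * γ ≤ (ε/γ) * γ := by nlinarith
              _ = ε := by field_simp
          have : t ^ (ε' * γ) ≤ t ^ ε := Real.rpow_le_rpow_of_exponent_le ht hεle
          nlinarith [Real.rpow_pos_of_pos (show (0:ℝ)<ε'⁻¹ by positivity) γ]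

lemma log_pow_ge (γ : ℝ) {ε : ℝ} (hε : 0 < ε) :
    ∃ c : ℝ, 0 < c ∧ ∀ t : ℝ, 1 ≤ t → c * t ^ (-ε) ≤ ell t ^ γ := by
  obtain ⟨c, hc, h⟩ := log_pow_le (-γ) hε
  refine ⟨c⁻¹, by positivity, fun t ht => ?_⟩
  have htpos : (0:ℝ) < t := lt_of_lt_of_le one_pos ht
  have h1 := h t ht
  have h2 : ell t ^ (-γ) * ell t ^ γ = 1 := by
    rw [← Real.rpow_add (ell_pos t)]; simp
  have h3 : t ^ (-ε) * t ^ ε = 1 := by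
    rw [← Real.rpow_add htpos]; simp
  have p1 : (0:ℝ) < ell t ^ (-γ) := Real.rpow_pos_of_pos (ell_pos t) _
  have p2 : (0:ℝ) < t ^ ε := Real.rpow_pos_of_pos htpos _
  have p3 : (0:ℝ) < t ^ (-ε) := Real.rpow_pos_of_pos htpos _
  have p4 : (0:ℝ) < ell t ^ γ := Real.rpow_pos_of_pos (ell_pos t) _
  rw [inv_mul_le_iff₀ hc] -- c⁻¹ * t^(-ε) ≤ X ↔ t^(-ε) ≤ c * X ?
  calc t ^ (-ε) = (t ^ ε)⁻¹ := by rw [← Real.rpow_neg htpos.le]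
    _ ≤ (c⁻¹ * ell t ^ (-γ))⁻¹ * 1 := by
        rw [mul_one]
        apply inv_anti₀ (by positivity)
        rw [inv_mul_le_iff₀ hc] at *
        nlinarith
    _ = c * ell t ^ γ := by
        rw [mul_inv, inv_inv, mul_one, mul_comm c]
        rw [show (ell t ^ (-γ))⁻¹ = ell t ^ γ by
          rw [← Real.rpow_neg (ell_pos t).le, neg_neg]]
        ring

lemma log_pow_le_zero (γ : ℝ) {ε : ℝ} (hε : 0 < ε) :
    ∃ c : ℝ, 0 < c ∧ ∀ t : ℝ, 0 < t → t ≤ 1 → ell t ^ γ ≤ c * t ^ (-ε) := by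
  obtain ⟨c, hc, h⟩ := log_pow_le γ hε
  refine ⟨c, hc, fun t ht ht1 => ?_⟩
  have h1 : (1:ℝ) ≤ t⁻¹ := one_le_inv_iff₀.mpr ⟨ht, ht1⟩
  have := h t⁻¹ h1
  rw [ell_inv] at this
  rwa [show (t:ℝ)⁻¹ ^ ε = t ^ (-ε) by
    rw [← Real.rpow_neg_one, ← Real.rpow_mul ht.le, neg_one_mul]] at this

lemma rearr_anti (f : ℝ → ℝ≥0∞) {t₁ t₂ : ℝ} (h : t₁ ≤ t₂) :
    rearr μI f t₂ ≤ rearr μI f t₁ := by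
  apply sInf_le_sInf
  intro l hl
  exact le_trans hl (ENNReal.ofReal_le_ofReal h)

lemma μI_apply (S : Set ℝ) : μI S = volume (S ∩ Ioi (0:ℝ)) := by
  rw [μI, Measure.restrict_apply' measurableSet_Ioi]

lemma exists_in_Ioo_of_ae {P : ℝ → Prop} (h : ∀ᵐ u ∂μI, P u) {x y : ℝ}
    (hx : 0 < x) (hxy : x < y) : ∃ u, u ∈ Ioo x y ∧ P u := by
  by_contra hcon
  push_neg at hcon
  have hsub : Ioo x y ⊆ {u | ¬ P u} := fun u hu => hcon u hu
  have h0 : μI {u | ¬ P u} = 0 := h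
  have h1 : μI (Ioo x y) = 0 := measure_mono_null hsub h0
  rw [μI_apply] at h1
  have h2 : Ioo x y ∩ Ioi (0:ℝ) = Ioo x y :=
    inter_eq_self_of_subset_left (fun u hu => lt_trans hx hu.1)
  rw [h2, Real.volume_Ioo] at h1
  simp only [ENNReal.ofReal_eq_zero] at h1
  linarith

lemma rearr_indicator_le (f : ℝ → ℝ≥0∞) {a u c mm : ℝ} (hc : 0 ≤ c) (hm : 0 < mm)
    (ha : 0 < a) (hu : 0 < u)
    (hb : ∀ x : ℝ, a < x → f x ≤ ENNReal.ofReal (c * x ^ (-mm))) :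
    rearr μI ((Ioi a).indicator f) u ≤ ENNReal.ofReal (c * (u + a) ^ (-mm)) := by
  apply sInf_le
  show μI {x | ENNReal.ofReal (c * (u + a) ^ (-mm)) < (Ioi a).indicator f x} ≤ ENNReal.ofReal u
  rw [μI_apply]
  have hsub : {x | ENNReal.ofReal (c * (u + a) ^ (-mm)) < (Ioi a).indicator f x} ∩ Ioi 0
      ⊆ Ioo a (u + a) := by
    rintro x ⟨hx1, _⟩
    simp only [mem_setOf_eq] at hx1
    by_cases hxa : x ∈ Ioi a
    · rw [indicator_of_mem hxa] at hx1
      have hxpos : (0:ℝ) < x := lt_trans ha hxa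
      have h2 : ENNReal.ofReal (c * (u + a) ^ (-mm)) < ENNReal.ofReal (c * x ^ (-mm)) :=
        lt_of_lt_of_le hx1 (hb x hxa)
      have h3 : c * (u + a) ^ (-mm) < c * x ^ (-mm) :=
        (ENNReal.ofReal_lt_ofReal_iff_of_nonneg (by positivity)).mp h2
      have hcpos : (0:ℝ) < c := by
        rcases eq_or_lt_of_le hc with h | h
        · exfalso; rw [← h] at h3; simp at h3
        · exact h
      have h4 : (u + a) ^ (-mm) < x ^ (-mm) := lt_of_mul_lt_mul_left h3 hcpos.le
      have h5 : x < u + a := by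
        by_contra hcon
        push_neg at hcon
        exact absurd (Real.rpow_le_rpow_of_nonpos (by linarith) hcon (by linarith))
          (not_le.mpr h4)
      exact ⟨hxa, h5⟩
    · rw [indicator_of_notMem hxa] at hx1
      exact absurd zero_le (not_le.mpr hx1)
  refine le_trans (measure_mono hsub) ?_
  rw [Real.volume_Ioo]
  apply ENNReal.ofReal_le_ofReal; linarith

lemma ae_μI_of_forall {P : ℝ → Prop} (h : ∀ t ∈ Ioi (0:ℝ), P t) : ∀ᵐ t ∂μI, P t :=
  ae_restrict_of_forall_mem measurableSet_Ioi h

lemma lqNorm_mono (q : ℝ≥0∞) {g h : ℝ → ℝ≥0∞} (hgh : ∀ t ∈ Ioi (0:ℝ), g t ≤ h t) :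
    lqNorm q g ≤ lqNorm q h := by
  unfold lqNorm
  split
  · exact essSup_mono_ae (ae_μI_of_forall hgh)
  · apply ENNReal.rpow_le_rpow _ (by positivity)
    apply lintegral_mono_ae
    exact (ae_μI_of_forall hgh).mono fun t ht => ENNReal.rpow_le_rpow ht ENNReal.toReal_nonneg

lemma lqNorm_const_mul (q : ℝ≥0∞) (hq : 1 ≤ q) (c : ℝ≥0∞) (hc : c ≠ ⊤) (g : ℝ → ℝ≥0∞) :
    lqNorm q (fun t => c * g t) = c * lqNorm q g := by
  unfold lqNorm
  split
  · exact ENNReal.essSup_const_mul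
  · rename_i hq'
    have hqt : 0 < q.toReal := ENNReal.toReal_pos (by intro h0; rw [h0] at hq; simp at hq) hq'
    have h1 : ∀ t : ℝ, (c * g t) ^ q.toReal = c ^ q.toReal * g t ^ q.toReal := fun t =>
      ENNReal.mul_rpow_of_nonneg _ _ hqt.le
    simp only [h1]
    rw [lintegral_const_mul' _ _ (ENNReal.rpow_lt_top_of_nonneg hqt.le hc).ne]
    rw [ENNReal.mul_rpow_of_nonneg _ _ (by positivity), ← ENNReal.rpow_mul,
      mul_inv_cancel₀ hqt.ne', ENNReal.rpow_one]

lemma lint_rpow_Ioc {e : ℝ} (he : -1 < e) :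
    ∫⁻ u in Ioc (0:ℝ) 1, ENNReal.ofReal (u ^ e) < ⊤ := by
  rw [← Measure.restrict_congr_set Ioo_ae_eq_Ioc]
  exact (intervalIntegral.integrableOn_Ioo_rpow_iff one_pos).mpr he |>.lintegral_lt_top

lemma lint_rpow_Ioi {e : ℝ} (he : e < -1) :
    ∫⁻ u in Ioi (1:ℝ), ENNReal.ofReal (u ^ e) < ⊤ :=
  (integrableOn_Ioi_rpow_of_lt he one_pos).lintegral_lt_top

lemma lint_log_Ioc {c : ℝ} (hc : c < -1) :
    ∫⁻ u in Ioc (0:ℝ) 1, ENNReal.ofReal (u⁻¹ * ell u ^ c) < ⊤ := by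
  set g : ℝ → ℝ := fun u => if u ≤ 0 then 0 else (1 - Real.log u) ^ (c + 1) with hg
  set g' : ℝ → ℝ := fun u => (c + 1) * (1 - Real.log u) ^ c * (-u⁻¹) with hg'
  have hderiv : ∀ u ∈ Ioo (0:ℝ) 1, HasDerivAt g (g' u) u := by
    intro u hu
    have hupos : (0:ℝ) < u := hu.1
    have hlogneg : Real.log u < 0 := Real.log_neg hupos hu.2
    have hbase : (0:ℝ) < 1 - Real.log u := by linarith
    have hinner : HasDerivAt (fun x : ℝ => 1 - Real.log x) (-u⁻¹) u := by
      exact (Real.hasDerivAt_log hupos.ne').const_sub 1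
    have houter : HasDerivAt (fun x : ℝ => x ^ (c+1)) ((c+1) * (1 - Real.log u) ^ (c+1-1))
        (1 - Real.log u) := Real.hasDerivAt_rpow_const (Or.inl hbase.ne')
    have hcomp := houter.comp u hinner
    have heq : (fun x : ℝ => (1 - Real.log x) ^ (c+1)) =ᶠ[nhds u] g := by
      filter_upwards [eventually_gt_nhds hupos] with x hx
      simp [hg, not_le.mpr hx]
    have hmain : HasDerivAt (fun x : ℝ => (1 - Real.log x) ^ (c+1))
        ((c+1) * (1 - Real.log u) ^ c * (-u⁻¹)) u := by
      rw [show c + 1 - 1 = c by ring] at hcomp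
      exact hcomp
    exact hmain.congr_of_eventuallyEq heq.symm
  have hpos : ∀ u ∈ Ioo (0:ℝ) 1, 0 ≤ g' u := by
    intro u hu
    have hlogneg : Real.log u < 0 := Real.log_neg hu.1 hu.2
    have h1 : (0:ℝ) < (1 - Real.log u) ^ c := Real.rpow_pos_of_pos (by linarith) _
    have hui : (0:ℝ) < u⁻¹ := inv_pos.mpr hu.1
    have hc1 : (0:ℝ) < -(c+1) := by linarith
    have h2 : (0:ℝ) ≤ (-(c+1)) * ((1 - Real.log u) ^ c) * u⁻¹ :=
      mul_nonneg (mul_nonneg hc1.le h1.le) hui.le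
    calc (0:ℝ) ≤ (-(c+1)) * ((1 - Real.log u) ^ c) * u⁻¹ := h2
      _ = (c + 1) * (1 - Real.log u) ^ c * (-u⁻¹) := by ring
  have hcont : ContinuousOn g (Icc (0:ℝ) 1) := by
    intro u hu
    rcases eq_or_lt_of_le hu.1 with h0 | h0
    · rw [← h0]
      have htend : Tendsto g (nhdsWithin 0 (Ioc (0:ℝ) 1)) (nhds 0) := by
        have h1 : Tendsto Real.log (nhdsWithin 0 (Ioc (0:ℝ) 1)) atBot :=
          Real.tendsto_log_nhdsNE_zero.mono_left
            (nhdsWithin_mono _ (fun x hx => ne_of_gt hx.1))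
        have h2 : Tendsto (fun u : ℝ => 1 - Real.log u) (nhdsWithin 0 (Ioc (0:ℝ) 1)) atTop :=
          tendsto_atTop_add_const_left _ 1 (tendsto_neg_atBot_atTop.comp h1)
        have h3 : Tendsto (fun x : ℝ => x ^ (c+1)) atTop (nhds 0) := by
          have := tendsto_rpow_neg_atTop (show (0:ℝ) < -(c+1) by linarith)
          simpa using this
        refine (h3.comp h2).congr' ?_
        filter_upwards [self_mem_nhdsWithin] with x hx
        simp [hg, not_le.mpr hx.1, Function.comp]
      have hcw : ContinuousWithinAt g (Ioc (0:ℝ) 1) 0 := by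
        rw [ContinuousWithinAt, show g 0 = 0 by simp [hg]]
        exact htend
      have : Icc (0:ℝ) 1 = insert 0 (Ioc 0 1) := by
        rw [Ioc_insert_left zero_le_one]
      rw [this]
      exact hcw.insert
    · have hbase : (0:ℝ) < 1 - Real.log u := by
        have : Real.log u ≤ 0 := Real.log_nonpos h0.le hu.2
        linarith
      have hcw : ContinuousWithinAt (fun x : ℝ => (1 - Real.log x) ^ (c+1)) (Icc 0 1) u := by
        apply ContinuousWithinAt.rpow_const
        · exact (continuous_const.continuousWithinAt.sub
            ((Real.continuousAt_log h0.ne').continuousWithinAt))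
        · exact Or.inl hbase.ne'
      apply hcw.congr_of_eventuallyEq
      · filter_upwards [(eventually_gt_nhds h0).filter_mono nhdsWithin_le_nhds] with x hx
        simp [hg, not_le.mpr hx]
      · simp [hg, not_le.mpr h0]
  have hint : IntegrableOn g' (Ioc (0:ℝ) 1) := intervalIntegral.integrableOn_deriv_of_nonneg hcont hderiv hpos
  have hint2 : IntegrableOn (fun u => (-(c+1))⁻¹ * g' u) (Ioc (0:ℝ) 1) := hint.const_mul _
  have hfin := hint2.lintegral_lt_top
  have heq : ∫⁻ u in Ioc (0:ℝ) 1, ENNReal.ofReal (u⁻¹ * ell u ^ c)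
      = ∫⁻ u in Ioc (0:ℝ) 1, ENNReal.ofReal ((-(c+1))⁻¹ * g' u) := by
    apply setLIntegral_congr_fun measurableSet_Ioc
    intro u hu
    beta_reduce
    congr 1
    have hlog : Real.log u ≤ 0 := Real.log_nonpos hu.1.le hu.2
    have hell : ell u = 1 - Real.log u := by
      rw [ell, abs_of_nonpos hlog]; ring
    have hne : -(c+1) ≠ 0 := by linarith
    rw [hell, hg']
    have : (-(c+1))⁻¹ * ((c+1) * (1-Real.log u)^c * (-u⁻¹))
        = ((-(c+1))⁻¹ * (-(c+1))) * ((1-Real.log u)^c * u⁻¹) := by ring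
    rw [this, inv_mul_cancel₀ hne, one_mul, mul_comm]
  rw [heq]
  exact hfin

lemma unit_ball_bound (p q : ℝ≥0∞) (A : ℝ × ℝ) (hq1 : 1 ≤ q)
    {δ : ℝ} (hδ : 0 < δ) (hδip : δ < p.toReal⁻¹) :
    ∃ c : ℝ, 0 < c ∧ ∀ f : ℝ → ℝ≥0∞, lzNorm p q A f ≤ 1 →
      ∀ t : ℝ, 2 ≤ t → rearr μI f t ≤ ENNReal.ofReal (c * t ^ (-(p.toReal⁻¹ - δ))) := by
  set ip := p.toReal⁻¹ with hip
  by_cases hqtop : q = ⊤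
  · -- q = ∞ case
    obtain ⟨c, hc, hcb⟩ := log_pow_le (-A.2) hδ
    refine ⟨c * 2 ^ (ip - δ), by positivity, fun f hf t ht => ?_⟩
    have hfe : ∀ᵐ u ∂μI, ENNReal.ofReal (u ^ (ip - q.toReal⁻¹) * ellA A u) * rearr μI f u ≤ 1 :=
      (ENNReal.ae_le_essSup _).mono fun u hu => le_trans hu (by
        rw [lzNorm, lqNorm, if_pos hqtop] at hf; exact hf)
    have ht2 : (0:ℝ) < t / 2 := by linarith
    obtain ⟨u, hu, hP⟩ := exists_in_Ioo_of_ae hfe ht2 (by linarith : t / 2 < t)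
    have hu1 : (1:ℝ) < u := by have := hu.1; linarith
    have hupos : (0:ℝ) < u := by linarith
    have hiq : q.toReal⁻¹ = 0 := by rw [hqtop]; simp
    rw [hiq, sub_zero] at hP
    have hellu : ellA A u = ell u ^ A.2 := by rw [ellA, if_neg (not_le.mpr hu1)]
    have hx : (0:ℝ) < u ^ ip * ellA A u := by
      rw [hellu]
      exact mul_pos (Real.rpow_pos_of_pos hupos _) (Real.rpow_pos_of_pos (ell_pos u) _)
    have h1 : rearr μI f u ≤ (ENNReal.ofReal (u ^ ip * ellA A u))⁻¹ :=
      ENNReal.le_inv_iff_mul_le.mpr (by rwa [mul_comm] at hP)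
    have h2 : rearr μI f t ≤ rearr μI f u := rearr_anti f hu.2.le
    refine le_trans (le_trans h2 h1) ?_
    rw [← ENNReal.ofReal_inv_of_pos hx]
    apply ENNReal.ofReal_le_ofReal
    have hinv : (u ^ ip * ellA A u)⁻¹ = u ^ (-ip) * ell u ^ (-A.2) := by
      rw [hellu, mul_inv, ← Real.rpow_neg hupos.le, ← Real.rpow_neg (ell_pos u).le]
    rw [hinv]
    have hb := hcb u hu1.le
    calc u ^ (-ip) * ell u ^ (-A.2) ≤ u ^ (-ip) * (c * u ^ δ) := by
          apply mul_le_mul_of_nonneg_left hb (Real.rpow_nonneg hupos.le _)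
      _ = c * u ^ (δ - ip) := by
          rw [show u ^ (-ip) * (c * u ^ δ) = c * (u ^ δ * u ^ (-ip)) by ring,
            ← Real.rpow_add hupos]
          ring_nf
      _ ≤ c * (t / 2) ^ (δ - ip) := by
          apply mul_le_mul_of_nonneg_left _ hc.le
          exact Real.rpow_le_rpow_of_nonpos ht2 hu.1.le (by linarith)
      _ = c * 2 ^ (ip - δ) * t ^ (-(ip - δ)) := by
          rw [div_eq_mul_inv, Real.mul_rpow (by linarith) (by positivity),
            ← Real.rpow_neg_one 2, ← Real.rpow_mul (by norm_num : (0:ℝ) ≤ 2)]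
          ring_nf
  · -- q < ∞ case
    have hq0 : q ≠ 0 := by intro h; rw [h] at hq1; simp at hq1
    have hqt : 0 < q.toReal := ENNReal.toReal_pos hq0 hqtop
    set iq := q.toReal⁻¹ with hiq
    have hiqpos : 0 < iq := by positivity
    set e := ip - iq with he
    obtain ⟨c2, hc2, hc2b⟩ := log_pow_ge (-|A.2|) hδ
    set c3 := 2 ^ (-|e|) * c2 with hc3
    have hc3pos : (0:ℝ) < c3 := by positivity
    refine ⟨c3⁻¹ * 2 ^ iq, by positivity, fun f hf t ht => ?_⟩
    have htpos : (0:ℝ) < t := by linarith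
    have ht2 : (0:ℝ) < t / 2 := by linarith
    have hint : ∫⁻ u in Ioi (0:ℝ),
        (ENNReal.ofReal (u ^ e * ellA A u) * rearr μI f u) ^ q.toReal ≤ 1 := by
      rw [lzNorm, lqNorm, if_neg hqtop] at hf
      have := ENNReal.rpow_le_rpow hf (le_of_lt hqt)
      rwa [← ENNReal.rpow_mul, inv_mul_cancel₀ hqt.ne', ENNReal.rpow_one,
        ENNReal.one_rpow] at this
    set Z := ENNReal.ofReal (c3 * t ^ (e - δ)) * rearr μI f t with hZ
    have hlow : ∀ u ∈ Ioo (t/2) t,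
        Z ^ q.toReal ≤ (ENNReal.ofReal (u ^ e * ellA A u) * rearr μI f u) ^ q.toReal := by
      intro u hu
      have hu1 : (1:ℝ) < u := by have := hu.1; linarith
      have hupos : (0:ℝ) < u := by linarith
      apply ENNReal.rpow_le_rpow _ hqt.le
      apply mul_le_mul'
      · apply ENNReal.ofReal_le_ofReal
        have hellu : ellA A u = ell u ^ A.2 := by rw [ellA, if_neg (not_le.mpr hu1)]
        have hell1 : ell u ^ A.2 ≥ ell t ^ (-|A.2|) := by
          calc ell t ^ (-|A.2|) ≤ ell u ^ (-|A.2|) :=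
                Real.rpow_le_rpow_of_nonpos (ell_pos u) (ell_mono hu1.le hu.2.le)
                  (neg_nonpos.mpr (abs_nonneg _))
            _ ≤ ell u ^ A.2 :=
                Real.rpow_le_rpow_of_exponent_le (one_le_ell u) (neg_abs_le _)
        have hue : u ^ e ≥ 2 ^ (-|e|) * t ^ e := by
          rcases le_or_gt 0 e with hepos | heneg
          · have h1 : (t/2) ^ e ≤ u ^ e := Real.rpow_le_rpow ht2.le hu.1.le hepos
            have h2 : (t/2) ^ e = 2 ^ (-e) * t ^ e := by
              rw [div_eq_mul_inv, Real.mul_rpow htpos.le (by positivity),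
                ← Real.rpow_neg_one 2, ← Real.rpow_mul (by norm_num : (0:ℝ) ≤ 2)]
              ring_nf
            have h3 : (2:ℝ) ^ (-|e|) ≤ 2 ^ (-e) :=
              Real.rpow_le_rpow_of_exponent_le one_le_two (by simp [abs_of_nonneg hepos])
            have h4 : (0:ℝ) ≤ t ^ e := Real.rpow_nonneg htpos.le _
            nlinarith
          · have h1 : t ^ e ≤ u ^ e :=
              Real.rpow_le_rpow_of_nonpos hupos hu.2.le heneg.le
            have h3 : (2:ℝ) ^ (-|e|) ≤ 1 := by
              apply Real.rpow_le_one_of_one_le_of_nonpos one_le_two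
              simp [abs_nonneg]
            have h4 : (0:ℝ) ≤ t ^ e := Real.rpow_nonneg htpos.le _
            nlinarith
        have hb := hc2b t (by linarith : (1:ℝ) ≤ t)
        calc c3 * t ^ (e - δ) = (2 ^ (-|e|) * t ^ e) * (c2 * t ^ (-δ)) := by
              rw [hc3, Real.rpow_sub htpos, Real.rpow_neg htpos.le]
              ring
          _ ≤ u ^ e * ell t ^ (-|A.2|) := by
              apply mul_le_mul hue hb (by positivity)
              exact Real.rpow_nonneg hupos.le _
          _ ≤ u ^ e * ellA A u := by
              rw [ellA, if_neg (not_le.mpr hu1)]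
              exact mul_le_mul_of_nonneg_left hell1 (Real.rpow_nonneg hupos.le _)
      · exact rearr_anti f hu.2.le
    have hZbound : Z ^ q.toReal * ENNReal.ofReal (t / 2) ≤ 1 := by
      have hS : MeasurableSet (Ioo (t/2) t) := measurableSet_Ioo
      calc Z ^ q.toReal * ENNReal.ofReal (t / 2)
          = ∫⁻ _ in Ioo (t/2) t, Z ^ q.toReal := by
            rw [setLIntegral_const, Real.volume_Ioo]
            congr 2
            ring
        _ ≤ ∫⁻ u in Ioo (t/2) t,
            (ENNReal.ofReal (u ^ e * ellA A u) * rearr μI f u) ^ q.toReal := by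
            apply lintegral_mono_ae
            exact (ae_restrict_of_forall_mem hS hlow)
        _ ≤ ∫⁻ u in Ioi (0:ℝ),
            (ENNReal.ofReal (u ^ e * ellA A u) * rearr μI f u) ^ q.toReal :=
            lintegral_mono_set (fun u hu => lt_trans ht2 hu.1)
        _ ≤ 1 := hint
    have hZ2 : Z ≤ ENNReal.ofReal ((t/2) ^ (-iq)) := by
      have h1 : Z ^ q.toReal ≤ (ENNReal.ofReal (t/2))⁻¹ :=
        ENNReal.le_inv_iff_mul_le.mpr hZbound
      have h2 := ENNReal.rpow_le_rpow h1 hiqpos.le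
      rw [← ENNReal.rpow_mul, mul_inv_cancel₀ hqt.ne', ENNReal.rpow_one] at h2
      have hE : (ENNReal.ofReal (t/2))⁻¹ ^ iq = ENNReal.ofReal ((t/2) ^ (-iq)) := by
        rw [ENNReal.inv_rpow, ENNReal.ofReal_rpow_of_pos ht2,
          ← ENNReal.ofReal_inv_of_pos (Real.rpow_pos_of_pos ht2 _),
          ← Real.rpow_neg ht2.le]
      rwa [hE] at h2
    -- extract rearr f t
    have hXpos : (0:ℝ) < c3 * t ^ (e - δ) := mul_pos hc3pos (Real.rpow_pos_of_pos htpos _)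
    have hX0 : ENNReal.ofReal (c3 * t ^ (e - δ)) ≠ 0 := by
      simp [ENNReal.ofReal_eq_zero, not_le, hXpos]
    have hXt : ENNReal.ofReal (c3 * t ^ (e - δ)) ≠ ⊤ := ENNReal.ofReal_ne_top
    have h3 : rearr μI f t ≤ (ENNReal.ofReal (c3 * t ^ (e - δ)))⁻¹
        * ENNReal.ofReal ((t/2) ^ (-iq)) := by
      calc rearr μI f t
          = (ENNReal.ofReal (c3 * t ^ (e - δ)))⁻¹ * Z := by
            rw [hZ, ← mul_assoc, ENNReal.inv_mul_cancel hX0 hXt, one_mul]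
        _ ≤ _ := mul_le_mul_right hZ2 _
    refine le_trans h3 ?_
    rw [← ENNReal.ofReal_inv_of_pos hXpos, ← ENNReal.ofReal_mul (by positivity)]
    apply ENNReal.ofReal_le_ofReal
    have : (c3 * t ^ (e - δ))⁻¹ * (t/2) ^ (-iq) = c3⁻¹ * 2 ^ iq * t ^ (-(ip - δ)) := by
      rw [mul_inv, ← Real.rpow_neg htpos.le,
        show ((t:ℝ)/2) ^ (-iq) = 2 ^ iq * t ^ (-iq) by
          rw [div_eq_mul_inv, Real.mul_rpow htpos.le (by positivity),
            ← Real.rpow_neg_one 2, ← Real.rpow_mul (by norm_num : (0:ℝ) ≤ 2)]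
          ring_nf]
      rw [show c3⁻¹ * t ^ (-(e - δ)) * (2 ^ iq * t ^ (-iq))
          = c3⁻¹ * 2 ^ iq * (t ^ (-(e - δ)) * t ^ (-iq)) by ring,
        ← Real.rpow_add htpos]
      congr 2
      rw [he]
      ring
    rw [this]

set_option maxHeartbeats 1000000

/-- if `p < r` then the tails are uniformly small:
`lim_{a→∞} sup_{‖f‖_{L^{p,q,A}} ≤ 1} ‖f^* χ_{(a,∞)}‖_{L^{r,s,B}} = 0`. -/
theorem lz_tail_vanishes_of_lt (p q r s : ℝ≥0∞) (A B : ℝ × ℝ)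
    (hA : LZAdmissible p q A) (hB : LZAdmissible r s B) (hpr : p < r) :
    Tendsto (fun a : ℝ =>
        ⨆ (f : ℝ → ℝ≥0∞) (_ : Measurable f) (_ : lzNorm p q A f ≤ 1),
          lzNorm r s B ((Set.Ioi a).indicator fun t => rearr μI f t))
      atTop (nhds 0) := by
  have hp_top : p ≠ ⊤ := (hpr.trans_le le_top).ne
  have hp1 : (1:ℝ≥0∞) ≤ p := by
    rcases hA with ⟨h,_⟩|⟨h,_⟩|⟨h,_⟩|⟨h,_⟩
    · exact h.ge
    · exact h.le
    · rw [h]; exact le_top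
    · rw [h]; exact le_top
  have hq1 : (1:ℝ≥0∞) ≤ q := by
    rcases hA with ⟨_,h,_⟩|⟨_,_,h⟩|⟨_,h,_⟩|⟨_,h,_⟩
    · exact h.ge
    · exact h
    · exact h
    · rw [h]; exact le_top
  have hs1 : (1:ℝ≥0∞) ≤ s := by
    rcases hB with ⟨_,h,_⟩|⟨_,_,h⟩|⟨_,h,_⟩|⟨_,h,_⟩
    · exact h.ge
    · exact h
    · exact h
    · rw [h]; exact le_top
  have hr1 : (1:ℝ≥0∞) < r := lt_of_le_of_lt hp1 hpr
  have hpt1 : (1:ℝ) ≤ p.toReal := by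
    have := ENNReal.toReal_mono hp_top hp1
    simpa using this
  set ip := p.toReal⁻¹ with hip
  set ir := r.toReal⁻¹ with hir
  have hippos : 0 < ip := by rw [hip]; exact inv_pos.mpr (by linarith)
  have hir0 : 0 ≤ ir := by rw [hir]; positivity
  have hird : ir < ip := by
    by_cases hrt : r = ⊤
    · rw [hir, hrt]; simpa using hippos
    · have h1 : p.toReal < r.toReal := (ENNReal.toReal_lt_toReal hp_top hrt).mpr hpr
      rw [hip, hir]
      exact inv_strictAnti₀ (by linarith) h1
  set d := ip - ir with hd
  have hdpos : 0 < d := by rw [hd]; linarith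
  set m := ip - d/4 with hm
  set η := d/2 with hη
  set κ := ir + d/4 with hκ
  have hmpos : 0 < m := by rw [hm, hd]; linarith
  have hκpos : 0 < κ := by rw [hκ]; linarith
  have hηpos : 0 < η := by rw [hη]; linarith
  have hηκm : η + κ = m := by rw [hη, hκ, hm]; ring
  have hκm : κ < m := by rw [hκ, hm, hd]; linarith
  have hηm : η ≤ m := by linarith
  obtain ⟨c1, hc1, hball⟩ := unit_ball_bound p q A hq1
    (show (0:ℝ) < d/4 by linarith) (show d/4 < p.toReal⁻¹ by rw [← hip]; linarith)
  have hmeq : -(p.toReal⁻¹ - d/4) = -m := by rw [hm, hip]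
  rw [hmeq] at hball
  set is' := s.toReal⁻¹ with his
  set G : ℝ → ℝ := fun u =>
    c1 * (u ^ (ir - is') * ellA B u * (if u ≤ 1 then 1 else u ^ (-κ))) with hG
  set K := lqNorm s (fun u => ENNReal.ofReal (G u)) with hK
  -- key elementary inequality
  have key_ineq : ∀ a : ℝ, 1 ≤ a → ∀ u : ℝ, 0 < u →
      (u + a) ^ (-m) ≤ a ^ (-η) * (if u ≤ 1 then 1 else u ^ (-κ)) := by
    intro a ha u hu
    have ha0 : (0:ℝ) < a := by linarith
    split
    · rw [mul_one]
      calc (u + a) ^ (-m) ≤ a ^ (-m) :=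
            Real.rpow_le_rpow_of_nonpos ha0 (by linarith) (by linarith)
        _ ≤ a ^ (-η) := Real.rpow_le_rpow_of_exponent_le ha (by linarith)
    · rename_i hu1
      push_neg at hu1
      have hX : (0:ℝ) < a ^ (η/m) * u ^ (κ/m) :=
        mul_pos (Real.rpow_pos_of_pos ha0 _) (Real.rpow_pos_of_pos hu _)
      have hAM : a ^ (η/m) * u ^ (κ/m) ≤ u + a := by
        have hw := Real.geom_mean_le_arith_mean2_weighted
          (show (0:ℝ) ≤ η/m from div_nonneg hηpos.le hmpos.le)
          (show (0:ℝ) ≤ κ/m from div_nonneg hκpos.le hmpos.le)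
          ha0.le hu.le (show η/m + κ/m = 1 by
            rw [← add_div, hηκm, div_self hmpos.ne'])
        calc a ^ (η/m) * u ^ (κ/m) ≤ η/m * a + κ/m * u := hw
          _ ≤ u + a := by
            have h1 : η/m ≤ 1 := by rw [div_le_one hmpos]; linarith
            have h2 : κ/m ≤ 1 := by rw [div_le_one hmpos]; linarith
            have h3 : 0 ≤ η/m := by positivity
            have h4 : 0 ≤ κ/m := by positivity
            nlinarith
      calc (u + a) ^ (-m) ≤ (a ^ (η/m) * u ^ (κ/m)) ^ (-m) :=
            Real.rpow_le_rpow_of_nonpos hX hAM (by linarith)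
        _ = a ^ (-η) * u ^ (-κ) := by
            rw [Real.mul_rpow (by positivity) (by positivity),
              ← Real.rpow_mul ha0.le, ← Real.rpow_mul hu.le]
            congr 2 <;> field_simp
  -- uniform bound on the sup
  have hbound : ∀ a : ℝ, 2 ≤ a → ∀ f : ℝ → ℝ≥0∞, lzNorm p q A f ≤ 1 →
      lzNorm r s B ((Set.Ioi a).indicator fun t => rearr μI f t)
        ≤ ENNReal.ofReal (a ^ (-η)) * K := by
    intro a ha f hf
    have ha0 : (0:ℝ) < a := by linarith
    have ha1 : (1:ℝ) ≤ a := by linarith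
    have hre : ∀ u ∈ Ioi (0:ℝ),
        rearr μI ((Set.Ioi a).indicator fun t => rearr μI f t) u
          ≤ ENNReal.ofReal (c1 * (u + a) ^ (-m)) := by
      intro u hu
      exact rearr_indicator_le _ hc1.le hmpos ha0 hu
        (fun x hx => hball f hf x (le_trans ha hx.le))
    calc lzNorm r s B ((Set.Ioi a).indicator fun t => rearr μI f t)
        ≤ lqNorm s (fun u => ENNReal.ofReal (u ^ (ir - is') * ellA B u)
            * ENNReal.ofReal (c1 * (u + a) ^ (-m))) := by
          apply lqNorm_mono
          intro u hu
          exact mul_le_mul_right (hre u hu) _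
      _ ≤ lqNorm s (fun u => ENNReal.ofReal (a ^ (-η)) * ENNReal.ofReal (G u)) := by
          apply lqNorm_mono
          intro u hu
          have hu0 : (0:ℝ) < u := hu
          have hnn : 0 ≤ u ^ (ir - is') * ellA B u :=
            mul_nonneg (Real.rpow_nonneg hu0.le _) (ellA_pos B u).le
          rw [← ENNReal.ofReal_mul hnn, ← ENNReal.ofReal_mul (Real.rpow_nonneg ha0.le _)]
          apply ENNReal.ofReal_le_ofReal
          have hkey := key_ineq a ha1 u hu0
          calc u ^ (ir - is') * ellA B u * (c1 * (u + a) ^ (-m))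
              ≤ u ^ (ir - is') * ellA B u
                * (c1 * (a ^ (-η) * (if u ≤ 1 then 1 else u ^ (-κ)))) := by
                apply mul_le_mul_of_nonneg_left _ hnn
                exact mul_le_mul_of_nonneg_left hkey hc1.le
            _ = a ^ (-η) * G u := by rw [hG]; ring
      _ = ENNReal.ofReal (a ^ (-η)) * K := by
          rw [hK]
          exact lqNorm_const_mul s hs1 _ ENNReal.ofReal_ne_top _
  have hKfin : K ≠ ⊤ := by
    by_cases hst : s = ⊤
    · -- essSup case
      have his0 : is' = 0 := by rw [his, hst]; simp
      obtain ⟨c4, hc4, hc4b⟩ : ∃ c : ℝ, 0 < c ∧ ∀ u : ℝ, 0 < u → u ≤ 1 →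
          u ^ ir * ellA B u ≤ c := by
        by_cases hrt : r = ⊤
        · have hB1 : B.1 ≤ 0 := by
            rcases hB with ⟨h1,_⟩|⟨_,h2,_⟩|⟨_,_,h3,_⟩|⟨_,_,h4⟩
            · rw [h1] at hr1; simp at hr1
            · rw [hrt] at h2; simp at h2
            · rw [hst] at h3; simp at h3
            · exact h4
          refine ⟨1, one_pos, fun u hu hu1 => ?_⟩
          have hir00 : ir = 0 := by rw [hir, hrt]; simp
          rw [hir00, Real.rpow_zero, one_mul, ellA, if_pos hu1]
          exact Real.rpow_le_one_of_one_le_of_nonpos (one_le_ell u) hB1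
        · have hirpos : 0 < ir := by
            rw [hir]
            have h1 : (1:ℝ) < r.toReal := by
              have := (ENNReal.toReal_lt_toReal (by simp) hrt).mpr hr1
              simpa using this
            exact inv_pos.mpr (by linarith)
          obtain ⟨c, hc, hcb⟩ := log_pow_le_zero B.1 (show (0:ℝ) < ir/2 by linarith)
          refine ⟨c, hc, fun u hu hu1 => ?_⟩
          rw [ellA, if_pos hu1]
          calc u ^ ir * ell u ^ B.1 ≤ u ^ ir * (c * u ^ (-(ir/2))) :=
                mul_le_mul_of_nonneg_left (hcb u hu hu1) (Real.rpow_nonneg hu.le _)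
            _ = c * u ^ (ir - ir/2) := by
                rw [show u ^ ir * (c * u ^ (-(ir/2))) = c * (u ^ ir * u ^ (-(ir/2))) by ring,
                  ← Real.rpow_add hu]
                ring_nf
            _ ≤ c * 1 := by
                apply mul_le_mul_of_nonneg_left _ hc.le
                exact Real.rpow_le_one hu.le hu1 (by linarith)
            _ = c := mul_one c
      obtain ⟨c5, hc5, hc5b⟩ : ∃ c : ℝ, 0 < c ∧ ∀ u : ℝ, 1 < u →
          u ^ ir * ellA B u * u ^ (-κ) ≤ c := by
        obtain ⟨c, hc, hcb⟩ := log_pow_le B.2 (show (0:ℝ) < d/8 by linarith)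
        refine ⟨c, hc, fun u hu1 => ?_⟩
        have hu0 : (0:ℝ) < u := by linarith
        rw [ellA, if_neg (not_le.mpr hu1)]
        calc u ^ ir * ell u ^ B.2 * u ^ (-κ)
            ≤ u ^ ir * (c * u ^ (d/8)) * u ^ (-κ) := by
              apply mul_le_mul_of_nonneg_right _ (Real.rpow_nonneg hu0.le _)
              exact mul_le_mul_of_nonneg_left (hcb u hu1.le) (Real.rpow_nonneg hu0.le _)
          _ = c * u ^ (ir + d/8 + -κ) := by
              rw [show u ^ ir * (c * u ^ (d/8)) * u ^ (-κ)
                  = c * (u ^ ir * u ^ (d/8) * u ^ (-κ)) by ring,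
                ← Real.rpow_add hu0, ← Real.rpow_add hu0]
          _ ≤ c * 1 := by
              apply mul_le_mul_of_nonneg_left _ hc.le
              apply Real.rpow_le_one_of_one_le_of_nonpos hu1.le
              rw [hκ]; linarith
          _ = c := mul_one c
      have hGb : ∀ u ∈ Ioi (0:ℝ), ENNReal.ofReal (G u)
          ≤ ENNReal.ofReal (c1 * max c4 c5) := by
        intro u hu
        have hu0 : (0:ℝ) < u := hu
        apply ENNReal.ofReal_le_ofReal
        simp only [hG, his0, sub_zero]
        by_cases hu1 : u ≤ 1
        · rw [if_pos hu1, mul_one]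
          exact mul_le_mul_of_nonneg_left
            ((hc4b u hu0 hu1).trans (le_max_left _ _)) hc1.le
        · rw [if_neg hu1]
          push_neg at hu1
          exact mul_le_mul_of_nonneg_left
            ((hc5b u hu1).trans (le_max_right _ _)) hc1.le
      rw [hK, lqNorm, if_pos hst]
      exact ne_top_of_le_ne_top ENNReal.ofReal_ne_top
        (essSup_le_of_ae_le _ (ae_μI_of_forall hGb))
    · -- integral case
      have hs0 : s ≠ 0 := by intro h; rw [h] at hs1; simp at hs1
      have hst0 : 0 < s.toReal := ENNReal.toReal_pos hs0 hst
      have hisst : is' * s.toReal = 1 := by rw [his]; exact inv_mul_cancel₀ hst0.ne'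
      have hGnn : ∀ u : ℝ, 0 < u → 0 ≤ G u := by
        intro u hu
        rw [hG]
        apply mul_nonneg hc1.le
        apply mul_nonneg (mul_nonneg (Real.rpow_nonneg hu.le _) (ellA_pos B u).le)
        split
        · exact zero_le_one
        · exact Real.rpow_nonneg hu.le _
      rw [hK, lqNorm, if_neg hst]
      apply ne_of_lt
      apply ENNReal.rpow_lt_top_of_nonneg (by positivity)
      have hsplit : (Ioc (0:ℝ) 1) ∪ Ioi 1 = Ioi 0 := Ioc_union_Ioi_eq_Ioi zero_le_one
      rw [← hsplit, lintegral_union measurableSet_Ioi (Ioc_disjoint_Ioi le_rfl)]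
      have hIA : ∫⁻ u in Ioc (0:ℝ) 1, ENNReal.ofReal (G u) ^ s.toReal < ⊤ := by
        by_cases hrt : r = ⊤
        · -- r = ∞ : log integral
          have hb1 : B.1 + s.toReal⁻¹ < 0 := by
            rcases hB with ⟨h1,_⟩|⟨_,h2,_⟩|⟨_,_,_,h3⟩|⟨_,h4,_⟩
            · rw [h1] at hr1; simp at hr1
            · rw [hrt] at h2; simp at h2
            · exact h3
            · exact absurd h4 hst
          have hbst : B.1 * s.toReal < -1 := by
            have h1 : (B.1 + s.toReal⁻¹) * s.toReal < 0 :=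
              mul_neg_of_neg_of_pos hb1 hst0
            have h2 : (B.1 + s.toReal⁻¹) * s.toReal = B.1 * s.toReal + 1 := by
              rw [add_mul, inv_mul_cancel₀ hst0.ne']
            linarith
          have hir00 : ir = 0 := by rw [hir, hrt]; simp
          have hpt : ∀ u ∈ Ioc (0:ℝ) 1, ENNReal.ofReal (G u) ^ s.toReal
              ≤ ENNReal.ofReal (c1 ^ s.toReal)
                * ENNReal.ofReal (u⁻¹ * ell u ^ (B.1 * s.toReal)) := by
            intro u hu
            have hu0 : (0:ℝ) < u := hu.1
            rw [ENNReal.ofReal_rpow_of_nonneg (hGnn u hu0) hst0.le,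
              ← ENNReal.ofReal_mul (Real.rpow_nonneg hc1.le _)]
            apply ENNReal.ofReal_le_ofReal
            have hGeq : G u = c1 * (u ^ (-is') * ell u ^ B.1) := by
              simp only [hG, if_pos hu.2, mul_one, hir00, zero_sub, ellA]
            rw [hGeq, Real.mul_rpow hc1.le
                (mul_nonneg (Real.rpow_nonneg hu0.le _) (Real.rpow_nonneg (ell_pos u).le _)),
              Real.mul_rpow (Real.rpow_nonneg hu0.le _) (Real.rpow_nonneg (ell_pos u).le _),
              ← Real.rpow_mul hu0.le, ← Real.rpow_mul (ell_pos u).le,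
              show -is' * s.toReal = -1 by linear_combination (-1 : ℝ) * hisst,
              Real.rpow_neg_one]
          calc ∫⁻ u in Ioc (0:ℝ) 1, ENNReal.ofReal (G u) ^ s.toReal
              ≤ ∫⁻ u in Ioc (0:ℝ) 1, ENNReal.ofReal (c1 ^ s.toReal)
                * ENNReal.ofReal (u⁻¹ * ell u ^ (B.1 * s.toReal)) :=
                lintegral_mono_ae (ae_restrict_of_forall_mem measurableSet_Ioc hpt)
            _ = ENNReal.ofReal (c1 ^ s.toReal)
                * ∫⁻ u in Ioc (0:ℝ) 1, ENNReal.ofReal (u⁻¹ * ell u ^ (B.1 * s.toReal)) :=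
                lintegral_const_mul' _ _ ENNReal.ofReal_ne_top
            _ < ⊤ := ENNReal.mul_lt_top ENNReal.ofReal_lt_top (lint_log_Ioc hbst)
        · -- r < ∞
          have hirpos : 0 < ir := by
            rw [hir]
            have h1 : (1:ℝ) < r.toReal := by
              have := (ENNReal.toReal_lt_toReal (by simp) hrt).mpr hr1
              simpa using this
            exact inv_pos.mpr (by linarith)
          obtain ⟨c6, hc6, hc6b⟩ := log_pow_le_zero (B.1 * s.toReal)
            (show (0:ℝ) < s.toReal * ir / 2 by positivity)
          have hpt : ∀ u ∈ Ioc (0:ℝ) 1, ENNReal.ofReal (G u) ^ s.toReal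
              ≤ ENNReal.ofReal (c1 ^ s.toReal * c6)
                * ENNReal.ofReal (u ^ (s.toReal * ir / 2 - 1)) := by
            intro u hu
            have hu0 : (0:ℝ) < u := hu.1
            rw [ENNReal.ofReal_rpow_of_nonneg (hGnn u hu0) hst0.le,
              ← ENNReal.ofReal_mul (mul_nonneg (Real.rpow_nonneg hc1.le _) hc6.le)]
            apply ENNReal.ofReal_le_ofReal
            have hGeq : G u = c1 * (u ^ (ir - is') * ell u ^ B.1) := by
              simp only [hG, if_pos hu.2, mul_one, ellA]
            rw [hGeq, Real.mul_rpow hc1.le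
                (mul_nonneg (Real.rpow_nonneg hu0.le _) (Real.rpow_nonneg (ell_pos u).le _)),
              Real.mul_rpow (Real.rpow_nonneg hu0.le _) (Real.rpow_nonneg (ell_pos u).le _),
              ← Real.rpow_mul hu0.le, ← Real.rpow_mul (ell_pos u).le]
            have hexp : (ir - is') * s.toReal = ir * s.toReal - 1 := by
              rw [sub_mul, hisst]
            calc c1 ^ s.toReal * (u ^ ((ir - is') * s.toReal) * ell u ^ (B.1 * s.toReal))
                ≤ c1 ^ s.toReal * (u ^ ((ir - is') * s.toReal)
                    * (c6 * u ^ (-(s.toReal * ir / 2)))) := by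
                  apply mul_le_mul_of_nonneg_left _ (Real.rpow_nonneg hc1.le _)
                  exact mul_le_mul_of_nonneg_left (hc6b u hu0 hu.2)
                    (Real.rpow_nonneg hu0.le _)
              _ = c1 ^ s.toReal * c6 * u ^ ((ir - is') * s.toReal + -(s.toReal * ir / 2)) := by
                  rw [Real.rpow_add hu0]; ring
              _ ≤ c1 ^ s.toReal * c6 * u ^ (s.toReal * ir / 2 - 1) := by
                  rw [hexp, show ir * s.toReal - 1 + -(s.toReal * ir / 2)
                    = s.toReal * ir / 2 - 1 by ring]
          calc ∫⁻ u in Ioc (0:ℝ) 1, ENNReal.ofReal (G u) ^ s.toReal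
              ≤ ∫⁻ u in Ioc (0:ℝ) 1, ENNReal.ofReal (c1 ^ s.toReal * c6)
                * ENNReal.ofReal (u ^ (s.toReal * ir / 2 - 1)) :=
                lintegral_mono_ae (ae_restrict_of_forall_mem measurableSet_Ioc hpt)
            _ = ENNReal.ofReal (c1 ^ s.toReal * c6)
                * ∫⁻ u in Ioc (0:ℝ) 1, ENNReal.ofReal (u ^ (s.toReal * ir / 2 - 1)) :=
                lintegral_const_mul' _ _ ENNReal.ofReal_ne_top
            _ < ⊤ := ENNReal.mul_lt_top ENNReal.ofReal_lt_top
                (lint_rpow_Ioc (by nlinarith))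
      have hIB : ∫⁻ u in Ioi (1:ℝ), ENNReal.ofReal (G u) ^ s.toReal < ⊤ := by
        obtain ⟨c7, hc7, hc7b⟩ := log_pow_le (B.2 * s.toReal)
          (show (0:ℝ) < s.toReal * d / 8 by positivity)
        have hirκ : ir - κ = -(d/4) := by rw [hκ]; ring
        have hpt : ∀ u ∈ Ioi (1:ℝ), ENNReal.ofReal (G u) ^ s.toReal
            ≤ ENNReal.ofReal (c1 ^ s.toReal * c7)
              * ENNReal.ofReal (u ^ (-(s.toReal * d / 8) - 1)) := by
          intro u hu
          have hu1 : (1:ℝ) < u := hu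
          have hu0 : (0:ℝ) < u := by linarith
          rw [ENNReal.ofReal_rpow_of_nonneg (hGnn u hu0) hst0.le,
            ← ENNReal.ofReal_mul (mul_nonneg (Real.rpow_nonneg hc1.le _) hc7.le)]
          apply ENNReal.ofReal_le_ofReal
          have hGeq : G u = c1 * (u ^ (ir - is' + -κ) * ell u ^ B.2) := by
            simp only [hG, if_neg (not_le.mpr hu1), ellA, Real.rpow_add hu0]
            ring
          rw [hGeq, Real.mul_rpow hc1.le
              (mul_nonneg (Real.rpow_nonneg hu0.le _) (Real.rpow_nonneg (ell_pos u).le _)),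
            Real.mul_rpow (Real.rpow_nonneg hu0.le _) (Real.rpow_nonneg (ell_pos u).le _),
            ← Real.rpow_mul hu0.le, ← Real.rpow_mul (ell_pos u).le]
          have hexp : (ir - is' + -κ) * s.toReal = -(s.toReal * d / 4) - 1 := by
            rw [add_mul, sub_mul, hisst, hκ]
            ring
          calc c1 ^ s.toReal * (u ^ ((ir - is' + -κ) * s.toReal) * ell u ^ (B.2 * s.toReal))
              ≤ c1 ^ s.toReal * (u ^ ((ir - is' + -κ) * s.toReal)
                  * (c7 * u ^ (s.toReal * d / 8))) := by
                apply mul_le_mul_of_nonneg_left _ (Real.rpow_nonneg hc1.le _)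
                exact mul_le_mul_of_nonneg_left (hc7b u hu1.le)
                  (Real.rpow_nonneg hu0.le _)
            _ = c1 ^ s.toReal * c7 * u ^ ((ir - is' + -κ) * s.toReal + s.toReal * d / 8) := by
                rw [Real.rpow_add hu0]; ring
            _ ≤ c1 ^ s.toReal * c7 * u ^ (-(s.toReal * d / 8) - 1) := by
                rw [hexp, show -(s.toReal * d / 4) - 1 + s.toReal * d / 8
                  = -(s.toReal * d / 8) - 1 by ring]
        calc ∫⁻ u in Ioi (1:ℝ), ENNReal.ofReal (G u) ^ s.toReal
            ≤ ∫⁻ u in Ioi (1:ℝ), ENNReal.ofReal (c1 ^ s.toReal * c7)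
              * ENNReal.ofReal (u ^ (-(s.toReal * d / 8) - 1)) :=
              lintegral_mono_ae (ae_restrict_of_forall_mem measurableSet_Ioi hpt)
          _ = ENNReal.ofReal (c1 ^ s.toReal * c7)
              * ∫⁻ u in Ioi (1:ℝ), ENNReal.ofReal (u ^ (-(s.toReal * d / 8) - 1)) :=
              lintegral_const_mul' _ _ ENNReal.ofReal_ne_top
          _ < ⊤ := ENNReal.mul_lt_top ENNReal.ofReal_lt_top
              (lint_rpow_Ioi (by nlinarith))
      exact (ENNReal.add_lt_top.mpr ⟨hIA, hIB⟩).ne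
  -- conclusion
  have hub : Tendsto (fun a : ℝ => ENNReal.ofReal (a ^ (-η)) * K) atTop (nhds 0) := by
    have h0 : Tendsto (fun a : ℝ => ENNReal.ofReal (a ^ (-η))) atTop (nhds 0) := by
      have h1 := ENNReal.tendsto_ofReal (tendsto_rpow_neg_atTop hηpos)
      simpa using h1
    have h2 := ENNReal.Tendsto.mul_const h0 (Or.inr hKfin)
    simpa using h2
  apply tendsto_of_tendsto_of_tendsto_of_le_of_le' tendsto_const_nhds hub
  · exact Eventually.of_forall (fun a => zero_le)
  · filter_upwards [eventually_ge_atTop (2:ℝ)] with a ha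
    apply iSup_le; intro f
    apply iSup_le; intro _
    apply iSup_le; intro hf
    exact hbound a ha f hf

end
end
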